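/- arXiv:2404.17996 — 2 statements merged into one kernel-verified Lean document; each statement's English description precedes it below -/
import Mathlib

section
/- Let π be an unsigned permutation of size n. If the cycle graph G(π) contains an oriented cycle C = (o_1, …, o_m) that is an even cycle, then C contains a valid oriented triple (o_i, o_j, o_k), with positions i < j < k, such that k = j + 1. -/
/-- Position map of the transposition τ(a,b,c): a rotation of the interval [a, c). -/
def rotFun (a b c p : ℕ) : ℕ :=
  if a ≤ p ∧ p < a + (c - b) then p + (b - a)
  else if a + (c - b) ≤ p ∧ p < c then p - (c - b)
  else p

/-- The permutation of positions performed by the transposition τ(a,b,c). -/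
def rotEquiv (a b c : ℕ) : Equiv.Perm ℕ :=
  if h : a ≤ b ∧ b ≤ c then
    { toFun := rotFun a b c
      invFun := rotFun a (a + c - b) c
      left_inv := by
        intro p
        unfold rotFun
        split_ifs <;> omega
      right_inv := by
        intro p
        unfold rotFun
        split_ifs <;> omega }
  else Equiv.refl ℕ

/-- `π` is (the extended version of) an unsigned permutation of size `n`:
a bijection of the positions `{0, …, n+1}` onto the values `{0, …, n+1}` fixing
`0` and `n+1` (encoded as a permutation of `ℕ` that is the identity beyond `n+1`). -/
def IsExtPerm (n : ℕ) (π : Equiv.Perm ℕ) : Prop :=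
  π 0 = 0 ∧ π (n + 1) = n + 1 ∧ ∀ x : ℕ, n + 1 < x → π x = x

/-- The permutation obtained from `π` by applying the transposition τ(a,b,c),
which exchanges the adjacent segments (π_a … π_{b-1}) and (π_b … π_{c-1}). -/
def applyTransp (π : Equiv.Perm ℕ) (a b c : ℕ) : Equiv.Perm ℕ :=
  (rotEquiv a b c).trans π

/-- Successor along an alternating cycle of the cycle graph `G(π)`: from the source
edge `e_i = (−π_i, +π_{i−1})` we traverse the target edge incident to `+π_{i−1}`,
namely `e'_{π_{i−1}+1} = (−(π_{i−1}+1), +π_{i−1})`, and arrive at the source edge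
whose right endpoint is `−(π_{i−1}+1)`, i.e. the one with index `π⁻¹(π_{i−1}+1)`. -/
def cgNext (π : Equiv.Perm ℕ) (i : ℕ) : ℕ :=
  π.symm (π (i - 1) + 1)

/-- The orbit of source-edge index `i` under `f` within `{1, …, n+1}`:
the set of source edges of the alternating cycle of `G(π)` through `e_i`. -/
def orbitOf (f : ℕ → ℕ) (n i : ℕ) : Finset ℕ :=
  (Finset.range (n + 2)).image (fun k => f^[k] i) ∩ Finset.Icc 1 (n + 1)

/-- The number of odd orbits of `f` on `{1, …, n+1}` (each orbit counted at its
minimal representative). -/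
def coddAux (f : ℕ → ℕ) (n : ℕ) : ℕ :=
  ((Finset.Icc 1 (n + 1)).filter
    (fun i => (∀ j ∈ orbitOf f n i, i ≤ j) ∧ (orbitOf f n i).card % 2 = 1)).card

/-- `c_odd(π)`: the number of odd alternating cycles of the cycle graph `G(π)`. -/
def codd (n : ℕ) (π : Equiv.Perm ℕ) : ℕ := coddAux (cgNext π) n

/-- The transposition τ(a,b,c) (with `1 ≤ a < b < c ≤ n+1`) is a 2-transposition for `π`:
it increases the number of odd cycles of the cycle graph by two. -/
def IsTwoTransposition (n : ℕ) (π : Equiv.Perm ℕ) (a b c : ℕ) : Prop :=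
  1 ≤ a ∧ a < b ∧ b < c ∧ c ≤ n + 1 ∧
  codd n (applyTransp π a b c) = codd n π + 2

/-- `(x, y, z)` (the indices of three source edges, read in cycle order) is a valid
oriented triple: it is an oriented triple, and the transposition acting on these three
source edges (i.e. on their indices sorted increasingly) is a 2-transposition. -/
def ValidOrientedTriple (n : ℕ) (π : Equiv.Perm ℕ) (x y z : ℕ) : Prop :=
  (x > z ∧ z > y ∧ IsTwoTransposition n π y z x) ∨
  (y > x ∧ x > z ∧ IsTwoTransposition n π z x y) ∨
  (z > y ∧ y > x ∧ IsTwoTransposition n π x y z)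

/-- The transposition acting on the three (distinct) source edges `x, y, z`
is a 2-transposition for `π`. -/
def IsTwoTranspositionOn (n : ℕ) (π : Equiv.Perm ℕ) (x y z : ℕ) : Prop :=
  ∃ a b c : ℕ, a < b ∧ b < c ∧ ({a, b, c} : Set ℕ) = {x, y, z} ∧
    IsTwoTransposition n π a b c

/-- `o 1, …, o m` is (the listing of the source-edge indices of) an `m`-cycle of the
cycle graph `G(π)`: the listing follows the traversal of the cycle starting from its
rightmost vertex along the incident source edge, so consecutive listed edges satisfy
`cgNext` and the first listed index is the largest one. -/
def IsCycleOf (n : ℕ) (π : Equiv.Perm ℕ) (m : ℕ) (o : ℕ → ℕ) : Prop :=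
  0 < m ∧
  (∀ t : ℕ, 1 ≤ t → t ≤ m → 1 ≤ o t ∧ o t ≤ n + 1) ∧
  (∀ s t : ℕ, 1 ≤ s → s ≤ m → 1 ≤ t → t ≤ m → o s = o t → s = t) ∧
  (∀ t : ℕ, 1 ≤ t → t ≤ m → cgNext π (o t) = o (t % m + 1)) ∧
  (∀ t : ℕ, 2 ≤ t → t ≤ m → o t < o 1)

/-- The cycle `C = (o 1, …, o m)` is oriented: its listing is not strictly decreasing. -/
def OrientedCycle (m : ℕ) (o : ℕ → ℕ) : Prop :=
  ¬ (∀ t : ℕ, 1 ≤ t → t + 1 ≤ m → o (t + 1) < o t)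

/-- `f` is a bijection of `{1,…,n+1}`. -/
def MapsBij (f : ℕ → ℕ) (n : ℕ) : Prop :=
  (∀ i ∈ Finset.Icc 1 (n+1), f i ∈ Finset.Icc 1 (n+1)) ∧
    Set.InjOn f (Finset.Icc 1 (n+1))

namespace MapsBij

variable {f : ℕ → ℕ} {n : ℕ}

theorem iter_mem (hf : MapsBij f n) {i : ℕ} (hi : i ∈ Finset.Icc 1 (n+1)) :
    ∀ k, f^[k] i ∈ Finset.Icc 1 (n+1) := by
  intro k
  induction k with
  | zero => simpa using hi
  | succ k ih => rw [Function.iterate_succ_apply']; exact hf.1 _ ih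

theorem iter_cancel (hf : MapsBij f n) {x y : ℕ} (hx : x ∈ Finset.Icc 1 (n+1))
    (hy : y ∈ Finset.Icc 1 (n+1)) : ∀ k, f^[k] x = f^[k] y → x = y := by
  intro k
  induction k with
  | zero => simp
  | succ k ih =>
    rw [Function.iterate_succ_apply', Function.iterate_succ_apply'] at *
    intro h
    exact ih (hf.2 (by exact_mod_cast hf.iter_mem hx k) (by exact_mod_cast hf.iter_mem hy k) h)

theorem exists_period (hf : MapsBij f n) {i : ℕ} (hi : i ∈ Finset.Icc 1 (n+1)) :
    ∃ p, 1 ≤ p ∧ p ≤ n + 1 ∧ f^[p] i = i := by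
  have hmap : ∀ k ∈ Finset.range (n+2), f^[k] i ∈ Finset.Icc 1 (n+1) :=
    fun k _ => hf.iter_mem hi k
  have hcard : (Finset.Icc 1 (n+1)).card < (Finset.range (n+2)).card := by
    simp [Nat.card_Icc]
  obtain ⟨k, hk, l, hl, hne, heq⟩ :=
    Finset.exists_ne_map_eq_of_card_lt_of_maps_to hcard hmap
  simp only [Finset.mem_range] at hk hl
  rcases Nat.lt_or_ge k l with h | h
  · refine ⟨l - k, by omega, by omega, ?_⟩
    have : f^[k] (f^[l-k] i) = f^[k] i := by
      rw [← Function.iterate_add_apply]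
      rw [show k + (l - k) = l by omega]
      exact heq.symm
    exact hf.iter_cancel (hf.iter_mem hi _) hi k this
  · have hkl : l < k := by omega
    refine ⟨k - l, by omega, by omega, ?_⟩
    have : f^[l] (f^[k-l] i) = f^[l] i := by
      rw [← Function.iterate_add_apply]
      rw [show l + (k - l) = k by omega]
      exact heq
    exact hf.iter_cancel (hf.iter_mem hi _) hi l this

theorem iterate_mul_period {i p : ℕ} (hp : f^[p] i = i) :
    ∀ q, f^[p * q] i = i := by
  intro q
  induction q with
  | zero => simp
  | succ q ih => rw [Nat.mul_succ, Function.iterate_add_apply, hp, ih]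

theorem iterate_mod {i p : ℕ} (hp : f^[p] i = i) (hp1 : 1 ≤ p) :
    ∀ k, f^[k] i = f^[k % p] i := by
  intro k
  conv_lhs => rw [show k = k % p + p * (k / p) by
    have := Nat.div_add_mod k p; omega]
  rw [Function.iterate_add_apply, iterate_mul_period hp]

theorem orbit_eq_range (hf : MapsBij f n) {i p : ℕ} (hi : i ∈ Finset.Icc 1 (n+1))
    (hp1 : 1 ≤ p) (hpn : p ≤ n + 1) (hp : f^[p] i = i) :
    orbitOf f n i = (Finset.range p).image (fun k => f^[k] i) := by
  ext x
  simp only [orbitOf, Finset.mem_inter, Finset.mem_image, Finset.mem_range]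
  constructor
  · rintro ⟨⟨k, hk, rfl⟩, _⟩
    exact ⟨k % p, Nat.mod_lt k (by omega), (iterate_mod hp hp1 k).symm⟩
  · rintro ⟨k, hk, rfl⟩
    exact ⟨⟨k, by omega, rfl⟩, hf.iter_mem hi k⟩

theorem mem_orbit_self {i : ℕ} (hi : i ∈ Finset.Icc 1 (n+1)) : i ∈ orbitOf f n i := by
  simp only [orbitOf, Finset.mem_inter, Finset.mem_image, Finset.mem_range]
  exact ⟨⟨0, by omega, rfl⟩, hi⟩

theorem orbit_subset {i : ℕ} : orbitOf f n i ⊆ Finset.Icc 1 (n+1) :=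
  Finset.inter_subset_right

theorem iter_mem_orbit (hf : MapsBij f n) {i : ℕ} (hi : i ∈ Finset.Icc 1 (n+1)) :
    ∀ k, f^[k] i ∈ orbitOf f n i := by
  intro k
  obtain ⟨p, hp1, hpn, hp⟩ := hf.exists_period hi
  rw [hf.orbit_eq_range hi hp1 hpn hp, iterate_mod hp hp1 k]
  exact Finset.mem_image.2 ⟨k % p, Finset.mem_range.2 (Nat.mod_lt k (by omega)), rfl⟩

theorem orbit_eq_of_mem (hf : MapsBij f n) {i j : ℕ} (hi : i ∈ Finset.Icc 1 (n+1))
    (hj : j ∈ orbitOf f n i) : orbitOf f n j = orbitOf f n i := by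
  obtain ⟨⟨s, hs, rfl⟩, hjS⟩ := by
    simpa only [orbitOf, Finset.mem_inter, Finset.mem_image, Finset.mem_range] using hj
  obtain ⟨p, hp1, hpn, hp⟩ := hf.exists_period hi
  have key : ∀ k, f^[k] i = f^[k + (p + p * (s / p) - s)] (f^[s] i) := by
    intro k
    rw [← Function.iterate_add_apply]
    have h1 : k + (p + p * (s / p) - s) + s = k + p * (1 + s / p) := by
      have h2 := Nat.div_add_mod s p
      have h3 : p * (1 + s / p) = p + p * (s / p) := by ring
      have h4 : s % p < p := Nat.mod_lt s (by omega)
      omega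
    rw [h1, Function.iterate_add_apply, iterate_mul_period hp]
  apply Finset.Subset.antisymm
  · intro x hx
    obtain ⟨⟨k, hk, rfl⟩, hxS⟩ := by
      simpa only [orbitOf, Finset.mem_inter, Finset.mem_image, Finset.mem_range] using hx
    rw [← Function.iterate_add_apply]
    exact hf.iter_mem_orbit hi (k + s)
  · intro x hx
    obtain ⟨⟨k, hk, rfl⟩, hxS⟩ := by
      simpa only [orbitOf, Finset.mem_inter, Finset.mem_image, Finset.mem_range] using hx
    rw [key k]
    exact hf.iter_mem_orbit hjS _

theorem coddAux_eq (hf : MapsBij f n) :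
    coddAux f n = (((Finset.Icc 1 (n+1)).image (orbitOf f n)).filter
      (fun O => O.card % 2 = 1)).card := by
  apply Finset.card_bij (fun i _ => orbitOf f n i)
  · intro i hi
    simp only [Finset.mem_filter] at hi ⊢
    exact ⟨Finset.mem_image_of_mem _ hi.1, hi.2.2⟩
  · intro i hi j hj h
    simp only [Finset.mem_filter] at hi hj
    have h1 : i ∈ orbitOf f n j := h ▸ mem_orbit_self hi.1
    have h2 : j ∈ orbitOf f n i := h.symm ▸ mem_orbit_self hj.1
    exact le_antisymm (hi.2.1 j h2) (hj.2.1 i h1)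
  · intro O hO
    simp only [Finset.mem_filter, Finset.mem_image] at hO
    obtain ⟨⟨j, hj, rfl⟩, hodd⟩ := hO
    have hne : (orbitOf f n j).Nonempty := ⟨j, mem_orbit_self hj⟩
    have hiO : (orbitOf f n j).min' hne ∈ orbitOf f n j := Finset.min'_mem _ _
    have hiS : (orbitOf f n j).min' hne ∈ Finset.Icc 1 (n+1) := orbit_subset hiO
    have horb : orbitOf f n ((orbitOf f n j).min' hne) = orbitOf f n j :=
      hf.orbit_eq_of_mem hj hiO
    refine ⟨(orbitOf f n j).min' hne, Finset.mem_filter.2 ⟨hiS, ⟨?_, ?_⟩⟩, horb⟩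
    · intro x hx
      exact Finset.min'_le _ _ (horb ▸ hx)
    · rw [horb]; exact hodd

end MapsBij

theorem coddAux_conj {n : ℕ} (e : Equiv.Perm ℕ)
    (hS : ∀ x, e x ∈ Finset.Icc 1 (n+1) ↔ x ∈ Finset.Icc 1 (n+1))
    {h g : ℕ → ℕ} (hh : MapsBij h n) (hg : ∀ x, g x = e.symm (h (e x))) :
    coddAux g n = coddAux h n := by
  have hS' : ∀ x, e.symm x ∈ Finset.Icc 1 (n+1) ↔ x ∈ Finset.Icc 1 (n+1) := by
    intro x
    conv_rhs => rw [← e.apply_symm_apply x]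
    exact (hS _).symm
  have giter : ∀ k x, g^[k] x = e.symm (h^[k] (e x)) := by
    intro k
    induction k with
    | zero => simp
    | succ k ih =>
      intro x
      rw [Function.iterate_succ_apply, Function.iterate_succ_apply, hg x, ih,
        e.apply_symm_apply]
  have gorb : ∀ i, orbitOf g n i = (orbitOf h n (e i)).image e.symm := by
    intro i
    ext x
    simp only [orbitOf, Finset.mem_inter, Finset.mem_image, Finset.mem_range]
    constructor
    · rintro ⟨⟨k, hk, rfl⟩, hxS⟩
      refine ⟨h^[k] (e i), ⟨⟨k, hk, rfl⟩, ?_⟩, (giter k i).symm⟩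
      rw [giter] at hxS
      exact (hS' _).mp hxS
    · rintro ⟨y, ⟨⟨k, hk, rfl⟩, hyS⟩, rfl⟩
      exact ⟨⟨k, hk, giter k i⟩, (hS' _).mpr hyS⟩
  have hgB : MapsBij g n := by
    constructor
    · intro i hi
      rw [hg]
      exact (hS' _).mpr (hh.1 _ ((hS _).mpr hi))
    · intro x hx y hy hxy
      rw [hg, hg] at hxy
      have := e.symm.injective hxy
      have := hh.2 ((hS _).mpr (by exact_mod_cast hx)) ((hS _).mpr (by exact_mod_cast hy)) this
      exact e.injective this
  rw [hgB.coddAux_eq, hh.coddAux_eq]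
  apply Finset.card_bij (fun O _ => O.image e)
  · intro O hO
    simp only [Finset.mem_filter, Finset.mem_image] at hO ⊢
    obtain ⟨⟨i, hi, rfl⟩, hodd⟩ := hO
    constructor
    · refine ⟨e i, (hS _).mpr hi, ?_⟩
      rw [gorb, Finset.image_image]
      simp
    · rw [Finset.card_image_of_injective _ e.injective]
      exact hodd
  · intro O₁ h₁ O₂ h₂ hOO
    exact Finset.image_injective e.injective hOO
  · intro O' hO'
    simp only [Finset.mem_filter, Finset.mem_image] at hO'
    obtain ⟨⟨j, hj, rfl⟩, hodd⟩ := hO'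
    refine ⟨orbitOf g n (e.symm j), ?_, ?_⟩
    · simp only [Finset.mem_filter, Finset.mem_image]
      constructor
      · exact ⟨e.symm j, (hS' _).mpr hj, rfl⟩
      · rw [gorb, e.apply_symm_apply, Finset.card_image_of_injective _ e.symm.injective]
        exact hodd
    · rw [gorb, e.apply_symm_apply, Finset.image_image]
      simp



/-- The 3-cycle a -> c -> b -> a on positions. -/
def triCyc (a b c x : ℕ) : ℕ :=
  if x = a then c else if x = b then a else if x = c then b else x

section Layer2

variable {n : ℕ} {π : Equiv.Perm ℕ}

theorem IsExtPerm.le (hπ : IsExtPerm n π) : ∀ x, x ≤ n → π x ≤ n := by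
  intro x hx
  by_contra hgt
  push_neg at hgt
  rcases Nat.lt_or_ge (π x) (n + 2) with h | h
  · have hx1 : π x = n + 1 := by omega
    have := π.injective (hx1.trans hπ.2.1.symm)
    omega
  · have : π (π x) = π x := hπ.2.2 _ (by omega)
    have := π.injective this
    omega

theorem IsExtPerm.pos (hπ : IsExtPerm n π) : ∀ x, 1 ≤ x → 1 ≤ π x := by
  intro x hx
  by_contra h
  push_neg at h
  have h0 : π x = 0 := by omega
  have := π.injective (h0.trans hπ.1.symm)
  omega

theorem IsExtPerm.symm (hπ : IsExtPerm n π) : IsExtPerm n π.symm := by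
  refine ⟨?_, ?_, ?_⟩
  · exact (Equiv.symm_apply_eq π).mpr hπ.1.symm
  · exact (Equiv.symm_apply_eq π).mpr hπ.2.1.symm
  · intro x hx
    exact (Equiv.symm_apply_eq π).mpr (hπ.2.2 x hx).symm

theorem IsExtPerm.cgNext_mapsBij (hπ : IsExtPerm n π) : MapsBij (cgNext π) n := by
  constructor
  · intro i hi
    simp only [Finset.mem_Icc] at hi ⊢
    unfold cgNext
    have h1 : π (i - 1) ≤ n := hπ.le _ (by omega)
    constructor
    · exact hπ.symm.pos _ (by omega)
    · have := hπ.symm.le (π (i-1) + 1)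
      rcases Nat.lt_or_ge (π (i-1) + 1) (n+1) with h | h
      · have := hπ.symm.le (π (i-1) + 1) (by omega)
        omega
      · have hx1 : π (i - 1) + 1 = n + 1 := by omega
        rw [hx1, hπ.symm.2.1]
  · intro x hx y hy hxy
    simp only [Finset.coe_Icc, Set.mem_Icc] at hx hy
    unfold cgNext at hxy
    have h1 := π.symm.injective hxy
    have h2 : π (x-1) = π (y-1) := by omega
    have := π.injective h2
    omega

theorem rotEquiv_apply {a b c : ℕ} (hab : a ≤ b) (hbc : b ≤ c) (x : ℕ) :
    rotEquiv a b c x = rotFun a b c x := by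
  rw [rotEquiv, dif_pos ⟨hab, hbc⟩]
  rfl

theorem rotEquiv_symm_apply {a b c : ℕ} (hab : a ≤ b) (hbc : b ≤ c) (x : ℕ) :
    (rotEquiv a b c).symm x = rotFun a (a + c - b) c x := by
  rw [rotEquiv, dif_pos ⟨hab, hbc⟩]
  rfl

theorem rotFun_key {a b c : ℕ} (ha : 1 ≤ a) (hab : a < b) (hbc : b < c) (i : ℕ) :
    rotFun a b c (i - 1) = triCyc a b c (rotFun a b c i) - 1 := by
  unfold rotFun triCyc
  split_ifs <;> omega

theorem rotFun_mem_iff {a b c : ℕ} (ha : 1 ≤ a) (hab : a ≤ b) (hbc : b ≤ c)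
    (hc : c ≤ n + 1) (x : ℕ) :
    rotFun a b c x ∈ Finset.Icc 1 (n+1) ↔ x ∈ Finset.Icc 1 (n+1) := by
  simp only [Finset.mem_Icc]
  unfold rotFun
  split_ifs <;> omega

theorem IsExtPerm.applyTransp {a b c : ℕ} (hπ : IsExtPerm n π) (ha : 1 ≤ a)
    (hab : a ≤ b) (hbc : b ≤ c) (hc : c ≤ n + 1) :
    IsExtPerm n (applyTransp π a b c) := by
  have h0 : ∀ x, c ≤ x → rotFun a b c x = x := by
    intro x hx; unfold rotFun; split_ifs <;> omega
  refine ⟨?_, ?_, ?_⟩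
  · show π (rotEquiv a b c 0) = 0
    rw [rotEquiv_apply hab hbc]
    have : rotFun a b c 0 = 0 := by unfold rotFun; split_ifs <;> omega
    rw [this, hπ.1]
  · show π (rotEquiv a b c (n+1)) = n + 1
    rw [rotEquiv_apply hab hbc, h0 _ (by omega), hπ.2.1]
  · intro x hx
    show π (rotEquiv a b c x) = x
    rw [rotEquiv_apply hab hbc, h0 _ (by omega)]
    exact hπ.2.2 x hx

theorem triCyc_mem {a b c : ℕ} (haS : a ∈ Finset.Icc 1 (n+1)) (hbS : b ∈ Finset.Icc 1 (n+1))
    (hcS : c ∈ Finset.Icc 1 (n+1)) (x : ℕ) (hx : x ∈ Finset.Icc 1 (n+1)) :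
    triCyc a b c x ∈ Finset.Icc 1 (n+1) := by
  simp only [Finset.mem_Icc] at *
  unfold triCyc
  split_ifs <;> omega

theorem triCyc_injOn {a b c : ℕ} (hab : a ≠ b) (hac : a ≠ c) (hbc : b ≠ c) :
    Function.Injective (triCyc a b c) := by
  intro x y hxy
  unfold triCyc at hxy
  split_ifs at hxy <;> omega

theorem mapsBij_comp_triCyc {f : ℕ → ℕ} {a b c : ℕ} (hf : MapsBij f n)
    (haS : a ∈ Finset.Icc 1 (n+1)) (hbS : b ∈ Finset.Icc 1 (n+1))
    (hcS : c ∈ Finset.Icc 1 (n+1)) (hab : a ≠ b) (hac : a ≠ c) (hbc : b ≠ c) :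
    MapsBij (fun x => f (triCyc a b c x)) n := by
  constructor
  · intro i hi
    exact hf.1 _ (triCyc_mem haS hbS hcS i hi)
  · intro x hx y hy hxy
    simp only [Finset.coe_Icc] at hx hy
    have h1 := hf.2 (by exact_mod_cast triCyc_mem haS hbS hcS x (by simpa using hx))
      (by exact_mod_cast triCyc_mem haS hbS hcS y (by simpa using hy)) hxy
    exact triCyc_injOn hab hac hbc h1

/-- The crucial conjugation identity: `cgNext (π ∘ ρ) = ρ⁻¹ ∘ (cgNext π ∘ σ) ∘ ρ`. -/
theorem cgNext_applyTransp {a b c : ℕ} (ha : 1 ≤ a) (hab : a < b) (hbc : b < c) (x : ℕ) :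
    cgNext (applyTransp π a b c) x =
      (rotEquiv a b c).symm (cgNext π (triCyc a b c (rotEquiv a b c x))) := by
  unfold cgNext applyTransp
  simp only [Equiv.trans_apply, Equiv.symm_trans_apply]
  have h1 : (rotEquiv a b c) (x - 1) = triCyc a b c ((rotEquiv a b c) x) - 1 := by
    rw [rotEquiv_apply (le_of_lt hab) (le_of_lt hbc), rotEquiv_apply (le_of_lt hab) (le_of_lt hbc)]
    exact rotFun_key ha hab hbc x
  rw [h1]

end Layer2
theorem codd_applyTransp (n : ℕ) (π : Equiv.Perm ℕ) (hπ : IsExtPerm n π)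
    (m : ℕ) (o : ℕ → ℕ) (hC : IsCycleOf n π m o) (hEven : m % 2 = 0)
    (t : ℕ) (ht2 : 2 ≤ t) (htm : t + 1 ≤ m)
    (hab : o t < o (t+1)) (hbc : o (t+1) < o 1) :
    codd n (applyTransp π (o t) (o (t+1)) (o 1)) = codd n π + 2 := by
  obtain ⟨hm0, hbound, hinj, hnext, hmax⟩ := hC
  have hm2 : 3 ≤ m := by omega
  set f := cgNext π with hfdef
  have hfB : MapsBij f n := hπ.cgNext_mapsBij
  have oS : ∀ s, 1 ≤ s → s ≤ m → o s ∈ Finset.Icc 1 (n+1) := by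
    intro s h1 h2
    exact Finset.mem_Icc.2 ⟨(hbound s h1 h2).1, (hbound s h1 h2).2⟩
  have hinj' : Set.InjOn o (Finset.Icc 1 m) := by
    intro x hx y hy hxy
    simp only [Finset.coe_Icc, Set.mem_Icc] at hx hy
    exact hinj x y hx.1 hx.2 hy.1 hy.2 hxy
  have hmn : m ≤ n + 1 := by
    have h := Finset.card_le_card_of_injOn o
      (fun s hs => oS s (Finset.mem_Icc.1 hs).1 (Finset.mem_Icc.1 hs).2) hinj'
    simpa [Nat.card_Icc] using h
  have f_o' : ∀ s, 1 ≤ s → s < m → f (o s) = o (s + 1) := by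
    intro s h1 h2
    rw [hnext s h1 (by omega), Nat.mod_eq_of_lt h2]
  have f_om : f (o m) = o 1 := by
    rw [hnext m (by omega) le_rfl, Nat.mod_self]
  set C := (Finset.Icc 1 m).image o with hCdef
  have mem_C : ∀ s, 1 ≤ s → s ≤ m → o s ∈ C := fun s h1 h2 =>
    Finset.mem_image.2 ⟨s, Finset.mem_Icc.2 ⟨h1, h2⟩, rfl⟩
  have fk1 : ∀ k, f^[k] (o 1) = o (k % m + 1) := by
    intro k
    induction k with
    | zero => simp
    | succ k ih =>
      rw [Function.iterate_succ_apply', ih]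
      have h1 : k % m < m := Nat.mod_lt _ (by omega)
      have hmod : (k+1) % m = (k % m + 1) % m := by
        conv_lhs => rw [Nat.add_mod]
        rw [Nat.mod_eq_of_lt (show 1 < m by omega)]
      rcases Nat.lt_or_ge (k % m + 1) m with h | h
      · rw [f_o' _ (by omega) h, hmod, Nat.mod_eq_of_lt h]
      · have hm' : k % m + 1 = m := by omega
        rw [hm', f_om, hmod, hm', Nat.mod_self]
  have fper : f^[m] (o 1) = o 1 := by rw [fk1, Nat.mod_self]
  have orbit1 : orbitOf f n (o 1) = C := by
    rw [hfB.orbit_eq_range (oS 1 (by omega) (by omega)) (by omega) hmn fper]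
    ext x
    simp only [Finset.mem_image, Finset.mem_range, Finset.mem_Icc, hCdef]
    constructor
    · rintro ⟨k, hk, rfl⟩
      rw [fk1, Nat.mod_eq_of_lt hk]
      exact ⟨k+1, ⟨by omega, by omega⟩, rfl⟩
    · rintro ⟨s, ⟨hs1, hs2⟩, rfl⟩
      exact ⟨s - 1, by omega,
        by rw [fk1, Nat.mod_eq_of_lt (by omega), show s - 1 + 1 = s by omega]⟩
  have orbitC : ∀ s, 1 ≤ s → s ≤ m → orbitOf f n (o s) = C := by
    intro s h1 h2
    rw [← orbit1]
    exact hfB.orbit_eq_of_mem (oS 1 (by omega) (by omega)) (orbit1 ▸ mem_C s h1 h2)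
  -- the three special values
  have aS := oS t (by omega) (by omega)
  have bS := oS (t+1) (by omega) (by omega)
  have cS := oS 1 (by omega) (by omega)
  have tri_a : triCyc (o t) (o (t+1)) (o 1) (o t) = o 1 := by
    simp [triCyc]
  have tri_b : triCyc (o t) (o (t+1)) (o 1) (o (t+1)) = o t := by
    unfold triCyc
    rw [if_neg (by omega), if_pos rfl]
  have tri_c : triCyc (o t) (o (t+1)) (o 1) (o 1) = o (t+1) := by
    unfold triCyc
    rw [if_neg (by omega), if_neg (by omega), if_pos rfl]
  have tri_id : ∀ x, x ≠ o t → x ≠ o (t+1) → x ≠ o 1 →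
      triCyc (o t) (o (t+1)) (o 1) x = x := by
    intro x h1 h2 h3
    unfold triCyc
    rw [if_neg h1, if_neg h2, if_neg h3]
  set h : ℕ → ℕ := fun x => f (triCyc (o t) (o (t+1)) (o 1) x) with hhdef
  have happ : ∀ x, h x = f (triCyc (o t) (o (t+1)) (o 1) x) := fun _ => rfl
  have hhB : MapsBij h n :=
    mapsBij_comp_triCyc hfB aS bS cS (by omega) (by omega) (by omega)
  -- orbit of b under h
  have hb_fix : h (o (t+1)) = o (t+1) := by
    rw [happ, tri_b, f_o' t (by omega) (by omega)]
  have orbOb : orbitOf h n (o (t+1)) = {o (t+1)} := by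
    rw [hhB.orbit_eq_range bS le_rfl (by omega) (by simpa using hb_fix)]
    simp
  -- orbit of a under h
  have hit_a : ∀ k, 1 ≤ k → k ≤ t - 1 → h^[k] (o t) = o (k+1) := by
    intro k
    induction k with
    | zero => omega
    | succ k ih =>
      intro _ h2
      rcases Nat.eq_zero_or_pos k with rfl | hk
      · rw [Function.iterate_one, happ, tri_a, f_o' 1 (by omega) (by omega)]
      · rw [Function.iterate_succ_apply', ih hk (by omega), happ,
          tri_id _ (fun he => by have := hinj _ _ (by omega) (by omega) (by omega) (by omega) he; omega)
            (fun he => by have := hinj _ _ (by omega) (by omega) (by omega) (by omega) he; omega)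
            (fun he => by have := hinj _ _ (by omega) (by omega) (by omega) (by omega) he; omega),
          f_o' (k+1) (by omega) (by omega)]
  have hpa : h^[t-1] (o t) = o t := by
    rw [hit_a (t-1) (by omega) le_rfl, show t - 1 + 1 = t by omega]
  have orbOa : orbitOf h n (o t) = (Finset.Icc 2 t).image o := by
    rw [hhB.orbit_eq_range aS (by omega) (by omega) hpa]
    ext x
    simp only [Finset.mem_image, Finset.mem_range, Finset.mem_Icc]
    constructor
    · rintro ⟨k, hk, rfl⟩
      rcases Nat.eq_zero_or_pos k with rfl | h1
      · exact ⟨t, ⟨ht2, le_rfl⟩, rfl⟩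
      · rw [hit_a k h1 (by omega)]
        exact ⟨k+1, ⟨by omega, by omega⟩, rfl⟩
    · rintro ⟨s, ⟨hs2, hst⟩, rfl⟩
      rcases eq_or_lt_of_le hst with rfl | hlt
      · exact ⟨0, by omega, rfl⟩
      · exact ⟨s-1, by omega,
          by rw [hit_a (s-1) (by omega) (by omega), show s-1+1 = s by omega]⟩
  -- orbit of c under h
  have hit_c : ∀ k, 1 ≤ k → k ≤ m - t - 1 → h^[k] (o 1) = o (t+1+k) := by
    intro k
    induction k with
    | zero => omega
    | succ k ih =>
      intro _ h2
      rcases Nat.eq_zero_or_pos k with rfl | hk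
      · rw [Function.iterate_one, happ, tri_c, f_o' (t+1) (by omega) (by omega)]
      · rw [Function.iterate_succ_apply', ih hk (by omega), happ,
          tri_id _ (fun he => by have := hinj _ _ (by omega) (by omega) (by omega) (by omega) he; omega)
            (fun he => by have := hinj _ _ (by omega) (by omega) (by omega) (by omega) he; omega)
            (fun he => by have := hinj _ _ (by omega) (by omega) (by omega) (by omega) he; omega),
          f_o' (t+1+k) (by omega) (by omega)]
        exact congrArg o (by omega)
  have hpc : h^[m-t] (o 1) = o 1 := by
    rcases eq_or_lt_of_le htm with heq | hlt
    · rw [show m - t = 1 by omega, Function.iterate_one, happ, tri_c,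
        show t + 1 = m from heq, f_om]
    · rw [show m - t = (m-t-1) + 1 by omega, Function.iterate_succ_apply',
        hit_c (m-t-1) (by omega) le_rfl, show t+1+(m-t-1) = m by omega, happ,
        tri_id _ (fun he => by have := hinj _ _ (by omega) (by omega) (by omega) (by omega) he; omega)
          (fun he => by have := hinj _ _ (by omega) (by omega) (by omega) (by omega) he; omega)
          (fun he => by have := hinj _ _ (by omega) (by omega) (by omega) (by omega) he; omega),
        f_om]
  have orbOc : orbitOf h n (o 1) = (insert 1 (Finset.Icc (t+2) m)).image o := by
    rw [hhB.orbit_eq_range cS (by omega) (by omega) hpc]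
    ext x
    simp only [Finset.mem_image, Finset.mem_range, Finset.mem_insert, Finset.mem_Icc]
    constructor
    · rintro ⟨k, hk, rfl⟩
      rcases Nat.eq_zero_or_pos k with rfl | h1
      · exact ⟨1, Or.inl rfl, rfl⟩
      · rw [hit_c k h1 (by omega)]
        exact ⟨t+1+k, Or.inr ⟨by omega, by omega⟩, rfl⟩
    · rintro ⟨s, hs, rfl⟩
      rcases hs with rfl | ⟨hs1, hs2⟩
      · exact ⟨0, by omega, rfl⟩
      · exact ⟨s-t-1, by omega,
          by rw [hit_c (s-t-1) (by omega) (by omega), show t+1+(s-t-1) = s by omega]⟩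
  -- orbits outside C are untouched
  have horb_out : ∀ i ∈ Finset.Icc 1 (n+1), i ∉ C → orbitOf h n i = orbitOf f n i := by
    intro i hiS hiC
    have hnotC : ∀ x ∈ orbitOf f n i, x ∉ C := by
      intro x hx hxC
      obtain ⟨s, hs, rfl⟩ := Finset.mem_image.1 hxC
      simp only [Finset.mem_Icc] at hs
      have he : orbitOf f n (o s) = orbitOf f n i := hfB.orbit_eq_of_mem hiS hx
      rw [orbitC s hs.1 hs.2] at he
      exact hiC (he ▸ MapsBij.mem_orbit_self hiS)
    have hiter : ∀ k, h^[k] i = f^[k] i := by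
      intro k
      induction k with
      | zero => rfl
      | succ k ih =>
        rw [Function.iterate_succ_apply', Function.iterate_succ_apply', ih, happ,
          tri_id _ (fun he => hnotC _ (hfB.iter_mem_orbit hiS k) (by rw [he]; exact mem_C t (by omega) (by omega)))
            (fun he => hnotC _ (hfB.iter_mem_orbit hiS k) (by rw [he]; exact mem_C (t+1) (by omega) (by omega)))
            (fun he => hnotC _ (hfB.iter_mem_orbit hiS k) (by rw [he]; exact mem_C 1 (by omega) (by omega)))]
    unfold orbitOf
    congr 1
    apply Finset.image_congr
    intro k _
    exact hiter k
  -- assembly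
  set D := ((Finset.Icc 1 (n+1)) \ C).image (orbitOf f n) with hDdef
  have cardC : C.card = m := by
    rw [hCdef, Finset.card_image_of_injOn hinj', Nat.card_Icc]
    omega
  have fimg : (Finset.Icc 1 (n+1)).image (orbitOf f n) = insert C D := by
    ext O
    simp only [Finset.mem_image, Finset.mem_insert, Finset.mem_sdiff, hDdef]
    constructor
    · rintro ⟨i, hi, rfl⟩
      by_cases hiC : i ∈ C
      · obtain ⟨s, hs, rfl⟩ := Finset.mem_image.1 hiC
        simp only [Finset.mem_Icc] at hs
        exact Or.inl (orbitC s hs.1 hs.2)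
      · exact Or.inr ⟨i, ⟨hi, hiC⟩, rfl⟩
    · rintro (rfl | ⟨i, ⟨hi, hiC⟩, rfl⟩)
      · exact ⟨o 1, oS 1 (by omega) (by omega), orbit1⟩
      · exact ⟨i, hi, rfl⟩
  have himg : (Finset.Icc 1 (n+1)).image (orbitOf h n) =
      insert ((Finset.Icc 2 t).image o) (insert ({o (t+1)} : Finset ℕ)
        (insert ((insert 1 (Finset.Icc (t+2) m)).image o) D)) := by
    ext O
    simp only [Finset.mem_image, Finset.mem_insert, Finset.mem_sdiff, hDdef]
    constructor
    · rintro ⟨i, hi, rfl⟩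
      by_cases hiC : i ∈ C
      · obtain ⟨s, hs, rfl⟩ := Finset.mem_image.1 hiC
        simp only [Finset.mem_Icc] at hs
        by_cases h2 : 2 ≤ s ∧ s ≤ t
        · left
          rw [← orbOa]
          refine hhB.orbit_eq_of_mem aS ?_
          rw [orbOa]
          exact Finset.mem_image.2 ⟨s, Finset.mem_Icc.2 h2, rfl⟩
        · by_cases h3 : s = t+1
          · subst h3
            exact Or.inr (Or.inl orbOb)
          · refine Or.inr (Or.inr (Or.inl ?_))
            rw [← orbOc]
            refine hhB.orbit_eq_of_mem cS ?_
            rw [orbOc]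
            refine Finset.mem_image.2 ⟨s, ?_, rfl⟩
            simp only [Finset.mem_insert, Finset.mem_Icc]
            omega
      · exact Or.inr (Or.inr (Or.inr ⟨i, ⟨hi, hiC⟩, (horb_out i hi hiC).symm ▸ rfl⟩))
    · rintro (rfl | rfl | rfl | ⟨i, ⟨hi, hiC⟩, rfl⟩)
      · exact ⟨o t, aS, orbOa⟩
      · exact ⟨o (t+1), bS, orbOb⟩
      · exact ⟨o 1, cS, orbOc⟩
      · exact ⟨i, hi, horb_out i hi hiC⟩
  -- disjointness and distinctness
  have hD_disj : ∀ O ∈ D, ∀ x ∈ O, x ∉ C := by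
    intro O hO x hx hxC
    obtain ⟨i, hi, rfl⟩ := Finset.mem_image.1 hO
    simp only [Finset.mem_sdiff] at hi
    obtain ⟨s, hs, rfl⟩ := Finset.mem_image.1 hxC
    simp only [Finset.mem_Icc] at hs
    have he : orbitOf f n (o s) = orbitOf f n i := hfB.orbit_eq_of_mem hi.1 hx
    rw [orbitC s hs.1 hs.2] at he
    exact hi.2 (he ▸ MapsBij.mem_orbit_self hi.1)
  have haOa : o t ∈ (Finset.Icc 2 t).image o :=
    Finset.mem_image.2 ⟨t, Finset.mem_Icc.2 ⟨ht2, le_rfl⟩, rfl⟩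
  have hcOc : o 1 ∈ (insert 1 (Finset.Icc (t+2) m)).image o :=
    Finset.mem_image.2 ⟨1, Finset.mem_insert_self _ _, rfl⟩
  have hOaD : (Finset.Icc 2 t).image o ∉ D :=
    fun hmem => hD_disj _ hmem _ haOa (mem_C t (by omega) (by omega))
  have hObD : ({o (t+1)} : Finset ℕ) ∉ D :=
    fun hmem => hD_disj _ hmem _ (Finset.mem_singleton_self _) (mem_C (t+1) (by omega) (by omega))
  have hOcD : (insert 1 (Finset.Icc (t+2) m)).image o ∉ D :=
    fun hmem => hD_disj _ hmem _ hcOc (mem_C 1 (by omega) (by omega))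
  have hbOa : o (t+1) ∉ (Finset.Icc 2 t).image o := by
    intro hmem
    obtain ⟨s, hs, he⟩ := Finset.mem_image.1 hmem
    simp only [Finset.mem_Icc] at hs
    have := hinj _ _ (by omega) (by omega) (by omega) (by omega) he
    omega
  have hbOc : o (t+1) ∉ (insert 1 (Finset.Icc (t+2) m)).image o := by
    intro hmem
    obtain ⟨s, hs, he⟩ := Finset.mem_image.1 hmem
    simp only [Finset.mem_insert, Finset.mem_Icc] at hs
    have := hinj _ _ (by omega) (by omega) (by omega) (by omega) he
    omega
  have haOc : o t ∉ (insert 1 (Finset.Icc (t+2) m)).image o := by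
    intro hmem
    obtain ⟨s, hs, he⟩ := Finset.mem_image.1 hmem
    simp only [Finset.mem_insert, Finset.mem_Icc] at hs
    have := hinj _ _ (by omega) (by omega) (by omega) (by omega) he
    omega
  have hOaOb : (Finset.Icc 2 t).image o ≠ ({o (t+1)} : Finset ℕ) :=
    fun he => hbOa (he ▸ Finset.mem_singleton_self _)
  have hObOc : ({o (t+1)} : Finset ℕ) ≠ (insert 1 (Finset.Icc (t+2) m)).image o :=
    fun he => hbOc (he ▸ Finset.mem_singleton_self _)
  have hOaOc : (Finset.Icc 2 t).image o ≠ (insert 1 (Finset.Icc (t+2) m)).image o :=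
    fun he => haOc (he ▸ haOa)
  have cardOa : ((Finset.Icc 2 t).image o).card = t - 1 := by
    rw [Finset.card_image_of_injOn (hinj'.mono (by
      intro x hx
      simp only [Finset.coe_Icc, Set.mem_Icc] at hx ⊢
      omega)), Nat.card_Icc]
    omega
  have cardOc : ((insert 1 (Finset.Icc (t+2) m)).image o).card = m - t := by
    rw [Finset.card_image_of_injOn (hinj'.mono (by
      intro x hx
      simp only [Finset.coe_insert, Set.mem_insert_iff, Finset.coe_Icc, Set.mem_Icc,
        Finset.mem_coe, Finset.mem_insert, Finset.mem_Icc] at hx ⊢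
      omega)),
      Finset.card_insert_of_notMem (by simp only [Finset.mem_Icc]; omega), Nat.card_Icc]
    omega
  -- the count
  have key : coddAux h n = coddAux f n + 2 := by
    have hPC : ¬ (C.card % 2 = 1) := by rw [cardC]; omega
    have hPb : ({o (t+1)} : Finset ℕ).card % 2 = 1 := by simp
    rw [hhB.coddAux_eq, hfB.coddAux_eq, fimg, himg,
      Finset.filter_insert, Finset.filter_insert, Finset.filter_insert,
      Finset.filter_insert, if_neg hPC, if_pos hPb]
    rcases Nat.even_or_odd t with ht | ht
    · obtain ⟨w, hw⟩ := ht
      have h1 : ((Finset.Icc 2 t).image o).card % 2 = 1 := by rw [cardOa]; omega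
      have h2 : ¬ (((insert 1 (Finset.Icc (t+2) m)).image o).card % 2 = 1) := by
        rw [cardOc]; omega
      rw [if_pos h1, if_neg h2,
        Finset.card_insert_of_notMem (by
          simp only [Finset.mem_insert, Finset.mem_filter]
          push_neg
          exact ⟨hOaOb, fun hmem _ => hOaD hmem⟩),
        Finset.card_insert_of_notMem (by
          simp only [Finset.mem_filter]
          exact fun hmem => hObD hmem.1)]
    · obtain ⟨w, hw⟩ := ht
      have h1 : ¬ (((Finset.Icc 2 t).image o).card % 2 = 1) := by rw [cardOa]; omega
      have h2 : ((insert 1 (Finset.Icc (t+2) m)).image o).card % 2 = 1 := by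
        rw [cardOc]; omega
      rw [if_neg h1, if_pos h2,
        Finset.card_insert_of_notMem (by
          simp only [Finset.mem_insert, Finset.mem_filter]
          push_neg
          exact ⟨hObOc, fun hmem _ => hObD hmem⟩),
        Finset.card_insert_of_notMem (by
          simp only [Finset.mem_filter]
          exact fun hmem => hOcD hmem.1)]
  -- transfer through the conjugation
  have hSpres : ∀ x, rotEquiv (o t) (o (t+1)) (o 1) x ∈ Finset.Icc 1 (n+1) ↔
      x ∈ Finset.Icc 1 (n+1) := by
    intro x
    rw [rotEquiv_apply (by omega) (by omega)]
    exact rotFun_mem_iff (by simp only [Finset.mem_Icc] at aS; omega) (by omega) (by omega)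
      (by simp only [Finset.mem_Icc] at cS; omega) x
  have hconj := coddAux_conj (rotEquiv (o t) (o (t+1)) (o 1)) hSpres hhB
    (cgNext_applyTransp (π := π) (by simp only [Finset.mem_Icc] at aS; omega) hab hbc)
  unfold codd
  rw [hconj, key]

/-- If the cycle graph `G(π)` of an unsigned permutation `π` of size `n`
contains an oriented cycle `C = (o_1, …, o_m)` that is an even cycle, then `C` contains a
valid oriented triple `(o_i, o_j, o_k)`, with positions `i < j < k`, such that `k = j + 1`. -/
theorem even_oriented_cycle_has_valid_triple_with_consecutive_pair
    (n : ℕ) (π : Equiv.Perm ℕ) (hπ : IsExtPerm n π)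
    (m : ℕ) (o : ℕ → ℕ) (hC : IsCycleOf n π m o)
    (hOriented : OrientedCycle m o) (hEven : m % 2 = 0) :
    ∃ i j k : ℕ, 1 ≤ i ∧ i < j ∧ j < k ∧ k ≤ m ∧ k = j + 1 ∧
      ValidOrientedTriple n π (o i) (o j) (o k) := by
  unfold OrientedCycle at hOriented
  push_neg at hOriented
  obtain ⟨t, ht1, htm, hge⟩ := hOriented
  obtain ⟨hm0, hbound, hinj, hnext, hmax⟩ := hC
  have hne : o t ≠ o (t+1) := fun he => by
    have := hinj t (t+1) ht1 (by omega) (by omega) htm he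
    omega
  have hlt : o t < o (t+1) := lt_of_le_of_ne hge hne
  have ht2 : 2 ≤ t := by
    by_contra hcon
    push_neg at hcon
    have ht1' : t = 1 := by omega
    subst ht1'
    have := hmax (1+1) (by omega) htm
    omega
  have hbc : o (t+1) < o 1 := hmax (t+1) (by omega) htm
  refine ⟨1, t, t+1, le_rfl, by omega, by omega, htm, rfl, ?_⟩
  left
  refine ⟨hbc, hlt, ?_⟩
  refine ⟨(hbound t (by omega) (by omega)).1, hlt, hbc,
    (hbound 1 (by omega) (by omega)).2, ?_⟩
  exact codd_applyTransp n π hπ m o ⟨hm0, hbound, hinj, hnext, hmax⟩ hEven t ht2 htm hlt hbc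
end

section
/- Let π be an unsigned permutation. If an odd cycle C = (o_1, …, o_m) of the cycle graph G(π) contains a valid oriented triple (o_i, o_j, o_k), with positions i < j < k and o_k > o_j > o_i, then C contains a valid oriented triple (o_{i'}, o_{j'}, o_{k'}), with positions i' < j' < k', such that i' = 1. -/
namespace CGAux

/-- `f` maps `{1,…,n+1}` into itself. -/
def Pmap (n : ℕ) (f : ℕ → ℕ) : Prop := ∀ x, 1 ≤ x → x ≤ n+1 → 1 ≤ f x ∧ f x ≤ n+1
/-- `f` is injective on `{1,…,n+1}`. -/
def Pinj (n : ℕ) (f : ℕ → ℕ) : Prop :=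
  ∀ x y, 1 ≤ x → x ≤ n+1 → 1 ≤ y → y ≤ n+1 → f x = f y → x = y

variable {n : ℕ} {f : ℕ → ℕ}

lemma iter_mem (hmap : Pmap n f) :
    ∀ k x, 1 ≤ x → x ≤ n+1 → 1 ≤ f^[k] x ∧ f^[k] x ≤ n+1 := by
  intro k
  induction k with
  | zero => intro x h1 h2; simpa using ⟨h1, h2⟩
  | succ k ih =>
    intro x h1 h2
    rw [Function.iterate_succ_apply']
    exact hmap _ (ih x h1 h2).1 (ih x h1 h2).2

lemma iter_inj (hmap : Pmap n f) (hinj : Pinj n f) :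
    ∀ k x y, 1 ≤ x → x ≤ n+1 → 1 ≤ y → y ≤ n+1 → f^[k] x = f^[k] y → x = y := by
  intro k
  induction k with
  | zero => intro x y _ _ _ _ h; simpa using h
  | succ k ih =>
    intro x y hx1 hx2 hy1 hy2 h
    rw [Function.iterate_succ_apply, Function.iterate_succ_apply] at h
    have := ih (f x) (f y) (hmap x hx1 hx2).1 (hmap x hx1 hx2).2
      (hmap y hy1 hy2).1 (hmap y hy1 hy2).2 h
    exact hinj x y hx1 hx2 hy1 hy2 this

lemma exists_period (hmap : Pmap n f) (hinj : Pinj n f) (x : ℕ)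
    (hx1 : 1 ≤ x) (hx2 : x ≤ n+1) :
    ∃ p, 0 < p ∧ p ≤ n+1 ∧ f^[p] x = x := by
  have hcard : (Finset.Icc 1 (n+1)).card < (Finset.range (n+2)).card := by
    simp [Nat.card_Icc]
  have hmaps : ∀ k ∈ Finset.range (n+2), f^[k] x ∈ Finset.Icc 1 (n+1) := by
    intro k _
    have := iter_mem hmap k x hx1 hx2
    simp [Finset.mem_Icc]; omega
  obtain ⟨k1, hk1, k2, hk2, hne, heq⟩ :=
    Finset.exists_ne_map_eq_of_card_lt_of_maps_to hcard hmaps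
  simp only [Finset.mem_range] at hk1 hk2
  rcases Nat.lt_or_ge k1 k2 with h | h
  · refine ⟨k2 - k1, by omega, by omega, ?_⟩
    have : f^[k1] (f^[k2-k1] x) = f^[k1] x := by
      rw [← Function.iterate_add_apply]
      rw [show k1 + (k2 - k1) = k2 by omega]
      exact heq.symm
    have hm := iter_mem hmap (k2-k1) x hx1 hx2
    exact iter_inj hmap hinj k1 _ _ hm.1 hm.2 hx1 hx2 this
  · have hlt : k2 < k1 := by omega
    refine ⟨k1 - k2, by omega, by omega, ?_⟩
    have : f^[k2] (f^[k1-k2] x) = f^[k2] x := by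
      rw [← Function.iterate_add_apply]
      rw [show k2 + (k1 - k2) = k1 by omega]
      exact heq
    have hm := iter_mem hmap (k1-k2) x hx1 hx2
    exact iter_inj hmap hinj k2 _ _ hm.1 hm.2 hx1 hx2 this

lemma iter_mod {x p : ℕ} (hp : 0 < p) (hfix : f^[p] x = x) (t : ℕ) :
    f^[t] x = f^[t % p] x := by
  conv_lhs => rw [show t = t % p + p * (t / p) from (Nat.mod_add_div t p).symm]
  rw [Function.iterate_add_apply, Function.iterate_mul]
  rw [Function.iterate_fixed hfix]

lemma mem_orbit_iff (hmap : Pmap n f) (hinj : Pinj n f) {x : ℕ}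
    (hx1 : 1 ≤ x) (hx2 : x ≤ n+1) (y : ℕ) :
    y ∈ orbitOf f n x ↔ ∃ k, f^[k] x = y := by
  unfold orbitOf
  simp only [Finset.mem_inter, Finset.mem_image, Finset.mem_range, Finset.mem_Icc]
  constructor
  · rintro ⟨⟨k, _, hk⟩, _⟩; exact ⟨k, hk⟩
  · rintro ⟨k, hk⟩
    obtain ⟨p, hp, hpn, hfix⟩ := exists_period hmap hinj x hx1 hx2
    have h1 := iter_mod hp hfix k
    have h2 := iter_mem hmap (k % p) x hx1 hx2
    refine ⟨⟨k % p, by have := Nat.mod_lt k hp; omega, by rw [← h1, hk]⟩, ?_⟩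
    rw [← hk, h1]; exact h2

lemma orbit_subset (x : ℕ) : orbitOf f n x ⊆ Finset.Icc 1 (n+1) :=
  Finset.inter_subset_right

lemma mem_orbit_self (hmap : Pmap n f) {x : ℕ} (hx1 : 1 ≤ x) (hx2 : x ≤ n+1) :
    x ∈ orbitOf f n x := by
  unfold orbitOf
  simp only [Finset.mem_inter, Finset.mem_image, Finset.mem_range, Finset.mem_Icc]
  exact ⟨⟨0, by omega, rfl⟩, hx1, hx2⟩

lemma orbit_eq (hmap : Pmap n f) (hinj : Pinj n f) {x y : ℕ}
    (hx1 : 1 ≤ x) (hx2 : x ≤ n+1) (hy : y ∈ orbitOf f n x) :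
    orbitOf f n y = orbitOf f n x := by
  have hyS := orbit_subset x hy
  simp only [Finset.mem_Icc] at hyS
  obtain ⟨k, hk⟩ := (mem_orbit_iff hmap hinj hx1 hx2 y).1 hy
  obtain ⟨p, hp, hpn, hfix⟩ := exists_period hmap hinj x hx1 hx2
  ext z
  rw [mem_orbit_iff hmap hinj hyS.1 hyS.2, mem_orbit_iff hmap hinj hx1 hx2]
  constructor
  · rintro ⟨l, hl⟩
    exact ⟨l + k, by rw [Function.iterate_add_apply, hk, hl]⟩
  · rintro ⟨s, hs⟩
    obtain ⟨p', rfl⟩ : ∃ p', p = p' + 1 := ⟨p - 1, by omega⟩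
    refine ⟨s + k * p', ?_⟩
    rw [← hk, ← Function.iterate_add_apply]
    rw [show s + k * p' + k = s + (p' + 1) * k from by ring]
    rw [Function.iterate_add_apply, Function.iterate_mul, Function.iterate_fixed hfix]
    exact hs

end CGAux
namespace CGAux

variable {n : ℕ} {f : ℕ → ℕ}

lemma cycle_iter (hmap : Pmap n f) {L : ℕ} (hL : 0 < L) {w : ℕ → ℕ}
    (hw : ∀ t, 1 ≤ t → t ≤ L → 1 ≤ w t ∧ w t ≤ n+1)
    (hnext : ∀ t, 1 ≤ t → t ≤ L → f (w t) = w (t % L + 1)) :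
    ∀ k s, 1 ≤ s → s ≤ L → f^[k] (w s) = w ((s - 1 + k) % L + 1) := by
  intro k
  induction k with
  | zero =>
    intro s h1 h2
    simp only [Function.iterate_zero_apply]
    congr 1
    rw [Nat.mod_eq_of_lt (show s - 1 + 0 < L by omega)]
    omega
  | succ k ih =>
    intro s h1 h2
    rw [Function.iterate_succ_apply', ih s h1 h2]
    have hmem : (s - 1 + k) % L < L := Nat.mod_lt _ hL
    rw [hnext _ (by omega) (by omega)]
    congr 1
    rw [Nat.mod_add_mod, Nat.add_assoc]

lemma cycle_orbit (hmap : Pmap n f) (hinj : Pinj n f) {L : ℕ} (hL : 0 < L)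
    {w : ℕ → ℕ}
    (hw : ∀ t, 1 ≤ t → t ≤ L → 1 ≤ w t ∧ w t ≤ n+1)
    (hnext : ∀ t, 1 ≤ t → t ≤ L → f (w t) = w (t % L + 1)) :
    ∀ s, 1 ≤ s → s ≤ L → orbitOf f n (w s) = (Finset.Icc 1 L).image w := by
  intro s h1 h2
  ext y
  rw [mem_orbit_iff hmap hinj (hw s h1 h2).1 (hw s h1 h2).2]
  simp only [Finset.mem_image, Finset.mem_Icc]
  constructor
  · rintro ⟨k, hk⟩
    refine ⟨(s - 1 + k) % L + 1, ⟨by omega, by have := Nat.mod_lt (s-1+k) hL; omega⟩, ?_⟩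
    rw [← cycle_iter hmap hL hw hnext k s h1 h2, hk]
  · rintro ⟨t, ⟨ht1, ht2⟩, ht⟩
    refine ⟨L + t - s, ?_⟩
    rw [cycle_iter hmap hL hw hnext _ s h1 h2]
    rw [show s - 1 + (L + t - s) = L + (t - 1) by omega]
    rw [Nat.add_mod_left, Nat.mod_eq_of_lt (show t - 1 < L by omega)]
    rw [show t - 1 + 1 = t by omega]
    exact ht

lemma cycle_count (hmap : Pmap n f) (hinj : Pinj n f) {L : ℕ} (hL : 0 < L)
    {w : ℕ → ℕ}
    (hw : ∀ t, 1 ≤ t → t ≤ L → 1 ≤ w t ∧ w t ≤ n+1)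
    (hwinj : ∀ s t, 1 ≤ s → s ≤ L → 1 ≤ t → t ≤ L → w s = w t → s = t)
    (hnext : ∀ t, 1 ≤ t → t ≤ L → f (w t) = w (t % L + 1)) :
    (((Finset.Icc 1 L).image w).filter
      (fun i => (∀ j ∈ orbitOf f n i, i ≤ j) ∧ (orbitOf f n i).card % 2 = 1)).card
      = L % 2 := by
  set T := (Finset.Icc 1 L).image w with hT
  have hTne : T.Nonempty := ⟨w 1, by
    simp only [hT, Finset.mem_image]; exact ⟨1, by simp [Finset.mem_Icc]; omega, rfl⟩⟩
  have hcardT : T.card = L := by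
    rw [hT, Finset.card_image_of_injOn, Nat.card_Icc]
    · omega
    · intro a ha b hb hab
      simp only [Finset.mem_coe, Finset.mem_Icc] at ha hb
      exact hwinj a b ha.1 ha.2 hb.1 hb.2 hab
  have horb : ∀ i ∈ T, orbitOf f n i = T := by
    intro i hi
    simp only [hT, Finset.mem_image, Finset.mem_Icc] at hi
    obtain ⟨s, ⟨h1, h2⟩, rfl⟩ := hi
    exact cycle_orbit hmap hinj hL hw hnext s h1 h2
  rcases Nat.even_or_odd L with hev | hod
  · have : L % 2 = 0 := Nat.even_iff.1 hev
    rw [this]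
    rw [Finset.card_eq_zero, Finset.filter_eq_empty_iff]
    intro i hi
    rw [horb i hi, hcardT, this]
    simp
  · have hL2 : L % 2 = 1 := Nat.odd_iff.1 hod
    rw [hL2]
    have : T.filter (fun i => (∀ j ∈ orbitOf f n i, i ≤ j) ∧ (orbitOf f n i).card % 2 = 1)
        = {T.min' hTne} := by
      ext i
      simp only [Finset.mem_filter, Finset.mem_singleton]
      constructor
      · rintro ⟨hi, hmin, _⟩
        refine le_antisymm ?_ (T.min'_le i hi)
        apply Finset.le_min'
        intro y hy
        exact hmin y (by rw [horb i hi]; exact hy)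
      · rintro rfl
        have hm := T.min'_mem hTne
        refine ⟨hm, ?_, ?_⟩
        · intro y hy
          rw [horb _ hm] at hy
          exact T.min'_le y hy
        · rw [horb _ hm, hcardT, hL2]
    rw [this, Finset.card_singleton]

lemma cycle_outside (hmap : Pmap n f) (hinj : Pinj n f) {L : ℕ} (hL : 0 < L)
    {w : ℕ → ℕ}
    (hw : ∀ t, 1 ≤ t → t ≤ L → 1 ≤ w t ∧ w t ≤ n+1)
    (hnext : ∀ t, 1 ≤ t → t ≤ L → f (w t) = w (t % L + 1))
    {x : ℕ} (hx1 : 1 ≤ x) (hx2 : x ≤ n+1)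
    (hx : x ∉ (Finset.Icc 1 L).image w) :
    ∀ k, f^[k] x ∉ (Finset.Icc 1 L).image w := by
  intro k
  induction k with
  | zero => simpa using hx
  | succ k ih =>
    intro hcon
    simp only [Finset.mem_image, Finset.mem_Icc] at hcon
    obtain ⟨t, ⟨ht1, ht2⟩, ht⟩ := hcon
    set t' := if t = 1 then L else t - 1 with ht'
    have ht'1 : 1 ≤ t' := by simp only [ht']; split <;> omega
    have ht'2 : t' ≤ L := by simp only [ht']; split <;> omega
    have hft' : f (w t') = w t := by
      rw [hnext t' ht'1 ht'2]
      congr 1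
      simp only [ht']
      split
      · rw [Nat.mod_self]; omega
      · rw [Nat.mod_eq_of_lt (by omega)]; omega
    have hiter := iter_mem hmap k x hx1 hx2
    have hwt' := hw t' ht'1 ht'2
    have : f^[k] x = w t' := by
      apply hinj _ _ hiter.1 hiter.2 hwt'.1 hwt'.2
      rw [hft', ht, Function.iterate_succ_apply']
    exact ih (by
      rw [this]
      simp only [Finset.mem_image, Finset.mem_Icc]
      exact ⟨t', ⟨ht'1, ht'2⟩, rfl⟩)

end CGAux
namespace CGAux

variable {n : ℕ}

/-- Minimum of a finset (0 if empty). -/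
def omin (s : Finset ℕ) : ℕ := s.min.getD 0

lemma omin_mem {s : Finset ℕ} (h : s.Nonempty) : omin s ∈ s := by
  obtain ⟨m, hm⟩ := Finset.min_of_nonempty h
  have := Finset.mem_of_min hm
  simp only [omin, hm]
  exact this

lemma omin_le {s : Finset ℕ} {y : ℕ} (hy : y ∈ s) : omin s ≤ y := by
  obtain ⟨m, hm⟩ := Finset.min_of_nonempty ⟨y, hy⟩
  have h2 := Finset.min_le hy
  rw [hm] at h2
  simp only [omin, hm]
  exact_mod_cast h2

lemma omin_eq {s : Finset ℕ} {x : ℕ} (hx : x ∈ s) (h : ∀ y ∈ s, x ≤ y) :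
    omin s = x :=
  le_antisymm (omin_le hx) (h _ (omin_mem ⟨x, hx⟩))

lemma coddAux_conj (n : ℕ) (g u v : ℕ → ℕ)
    (hgm : Pmap n g) (hgi : Pinj n g)
    (hu : ∀ x, 1 ≤ x → x ≤ n+1 → 1 ≤ u x ∧ u x ≤ n+1)
    (hv : ∀ x, 1 ≤ x → x ≤ n+1 → 1 ≤ v x ∧ v x ≤ n+1)
    (hvu : ∀ x, 1 ≤ x → x ≤ n+1 → v (u x) = x)
    (huv : ∀ x, 1 ≤ x → x ≤ n+1 → u (v x) = x)
    (h : ℕ → ℕ) (hh : ∀ x, 1 ≤ x → x ≤ n+1 → h x = v (g (u x))) :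
    coddAux h n = coddAux g n := by
  -- derived facts
  have hhm : Pmap n h := by
    intro x h1 h2
    rw [hh x h1 h2]
    have h3 := hu x h1 h2
    have h4 := hgm _ h3.1 h3.2
    exact hv _ h4.1 h4.2
  have hhi : Pinj n h := by
    intro x y h1 h2 h3 h4 heq
    rw [hh x h1 h2, hh y h3 h4] at heq
    have hx' := hu x h1 h2
    have hy' := hu y h3 h4
    have hgx := hgm _ hx'.1 hx'.2
    have hgy := hgm _ hy'.1 hy'.2
    have : g (u x) = g (u y) := by
      have := congrArg u heq
      rwa [huv _ hgx.1 hgx.2, huv _ hgy.1 hgy.2] at this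
    have : u x = u y := hgi _ _ hx'.1 hx'.2 hy'.1 hy'.2 this
    have := congrArg v this
    rwa [hvu x h1 h2, hvu y h3 h4] at this
  have hvinj : ∀ x y, 1 ≤ x → x ≤ n+1 → 1 ≤ y → y ≤ n+1 → v x = v y → x = y := by
    intro x y h1 h2 h3 h4 heq
    have := congrArg u heq
    rwa [huv x h1 h2, huv y h3 h4] at this
  have hiter : ∀ k x, 1 ≤ x → x ≤ n+1 → h^[k] x = v (g^[k] (u x)) := by
    intro k
    induction k with
    | zero => intro x h1 h2; simp [hvu x h1 h2]
    | succ k ih =>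
      intro x h1 h2
      rw [Function.iterate_succ_apply', ih x h1 h2]
      have hux := hu x h1 h2
      have hgk := iter_mem hgm k (u x) hux.1 hux.2
      have hvk := hv _ hgk.1 hgk.2
      rw [hh _ hvk.1 hvk.2, huv _ hgk.1 hgk.2, Function.iterate_succ_apply']
  have horb : ∀ x, 1 ≤ x → x ≤ n+1 →
      orbitOf h n x = (orbitOf g n (u x)).image v := by
    intro x h1 h2
    have hux := hu x h1 h2
    ext y
    rw [mem_orbit_iff hhm hhi h1 h2]
    simp only [Finset.mem_image]
    constructor
    · rintro ⟨k, hk⟩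
      refine ⟨g^[k] (u x), ?_, ?_⟩
      · rw [mem_orbit_iff hgm hgi hux.1 hux.2]; exact ⟨k, rfl⟩
      · rw [← hiter k x h1 h2, hk]
    · rintro ⟨z, hz, hzy⟩
      obtain ⟨k, hk⟩ := (mem_orbit_iff hgm hgi hux.1 hux.2 z).1 hz
      exact ⟨k, by rw [hiter k x h1 h2, hk, hzy]⟩
  have hcard : ∀ x, 1 ≤ x → x ≤ n+1 →
      (orbitOf h n x).card = (orbitOf g n (u x)).card := by
    intro x h1 h2
    rw [horb x h1 h2]
    apply Finset.card_image_of_injOn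
    intro a ha b hb hab
    have haS := orbit_subset _ ha
    have hbS := orbit_subset _ hb
    simp only [Finset.mem_Icc] at haS hbS
    exact hvinj a b haS.1 haS.2 hbS.1 hbS.2 hab
  unfold coddAux
  apply Finset.card_bij' (i := fun a _ => omin (orbitOf g n (u a)))
    (j := fun b _ => omin (orbitOf h n (v b)))
  · -- hi : maps into target filter
    intro a ha
    simp only [Finset.mem_filter, Finset.mem_Icc] at ha ⊢
    obtain ⟨⟨ha1, ha2⟩, hamin, hacard⟩ := ha
    have hua := hu a ha1 ha2
    have hne : (orbitOf g n (u a)).Nonempty := ⟨u a, mem_orbit_self hgm hua.1 hua.2⟩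
    have hbmem : omin (orbitOf g n (u a)) ∈ orbitOf g n (u a) := omin_mem hne
    have hbS := orbit_subset _ hbmem
    simp only [Finset.mem_Icc] at hbS
    have hOeq : orbitOf g n (omin (orbitOf g n (u a))) = orbitOf g n (u a) :=
      orbit_eq hgm hgi hua.1 hua.2 hbmem
    refine ⟨⟨hbS.1, hbS.2⟩, ?_, ?_⟩
    · intro y hy
      rw [hOeq] at hy
      exact omin_le hy
    · rw [hOeq, ← hcard a ha1 ha2]
      exact hacard
  · -- hj
    intro b hb
    simp only [Finset.mem_filter, Finset.mem_Icc] at hb ⊢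
    obtain ⟨⟨hb1, hb2⟩, hbmin, hbcard⟩ := hb
    have hvb := hv b hb1 hb2
    have hne : (orbitOf h n (v b)).Nonempty := ⟨v b, mem_orbit_self hhm hvb.1 hvb.2⟩
    have hamem : omin (orbitOf h n (v b)) ∈ orbitOf h n (v b) := omin_mem hne
    have haS := orbit_subset _ hamem
    simp only [Finset.mem_Icc] at haS
    have hOeq : orbitOf h n (omin (orbitOf h n (v b))) = orbitOf h n (v b) :=
      orbit_eq hhm hhi hvb.1 hvb.2 hamem
    refine ⟨⟨haS.1, haS.2⟩, ?_, ?_⟩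
    · intro y hy
      rw [hOeq] at hy
      exact omin_le hy
    · rw [hOeq, hcard _ hvb.1 hvb.2, huv b hb1 hb2]
      exact hbcard
  · -- left inverse
    intro a ha
    simp only [Finset.mem_filter, Finset.mem_Icc] at ha
    obtain ⟨⟨ha1, ha2⟩, hamin, hacard⟩ := ha
    have hua := hu a ha1 ha2
    have hne : (orbitOf g n (u a)).Nonempty := ⟨u a, mem_orbit_self hgm hua.1 hua.2⟩
    have hbmem : omin (orbitOf g n (u a)) ∈ orbitOf g n (u a) := omin_mem hne
    have hvbmem : v (omin (orbitOf g n (u a))) ∈ orbitOf h n a := by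
      rw [horb a ha1 ha2]
      exact Finset.mem_image_of_mem v hbmem
    have hOeq : orbitOf h n (v (omin (orbitOf g n (u a)))) = orbitOf h n a :=
      orbit_eq hhm hhi ha1 ha2 hvbmem
    rw [hOeq]
    exact omin_eq (mem_orbit_self hhm ha1 ha2) hamin
  · -- right inverse
    intro b hb
    simp only [Finset.mem_filter, Finset.mem_Icc] at hb
    obtain ⟨⟨hb1, hb2⟩, hbmin, hbcard⟩ := hb
    have hvb := hv b hb1 hb2
    have hne : (orbitOf h n (v b)).Nonempty := ⟨v b, mem_orbit_self hhm hvb.1 hvb.2⟩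
    have hamem : omin (orbitOf h n (v b)) ∈ orbitOf h n (v b) := omin_mem hne
    have haS := orbit_subset _ hamem
    simp only [Finset.mem_Icc] at haS
    have hvbOrb : orbitOf h n (v b) = (orbitOf g n b).image v := by
      rw [horb _ hvb.1 hvb.2, huv b hb1 hb2]
    have : omin (orbitOf h n (v b)) ∈ (orbitOf g n b).image v := by
      rw [← hvbOrb]; exact hamem
    simp only [Finset.mem_image] at this
    obtain ⟨z, hz, hza⟩ := this
    have hzS := orbit_subset _ hz
    simp only [Finset.mem_Icc] at hzS
    have huaz : u (omin (orbitOf h n (v b))) = z := by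
      rw [← hza, huv _ hzS.1 hzS.2]
    have hOeq : orbitOf g n (u (omin (orbitOf h n (v b)))) = orbitOf g n b := by
      rw [huaz]
      exact orbit_eq hgm hgi hb1 hb2 hz
    rw [hOeq]
    exact omin_eq (mem_orbit_self hgm hb1 hb2) hbmin

end CGAux
namespace CGAux

lemma engine (n : ℕ) (f : ℕ → ℕ) (hmap : Pmap n f) (hinj : Pinj n f)
    (m : ℕ) (o : ℕ → ℕ) (hm : 0 < m)
    (ho : ∀ t, 1 ≤ t → t ≤ m → 1 ≤ o t ∧ o t ≤ n+1)
    (hoinj : ∀ s t, 1 ≤ s → s ≤ m → 1 ≤ t → t ≤ m → o s = o t → s = t)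
    (hnext : ∀ t, 1 ≤ t → t ≤ m → f (o t) = o (t % m + 1))
    (p q r : ℕ) (hp : 1 ≤ p) (hpq : p < q) (hqr : q < r) (hr : r ≤ m) :
    coddAux (fun x => f (if x = o p then o r else if x = o r then o q else
      if x = o q then o p else x)) n + m % 2
      = coddAux f n + ((q - p) % 2 + (r - q) % 2 + (m + p - r) % 2) := by
  set ε : ℕ → ℕ := fun x => if x = o p then o r else if x = o r then o q else
      if x = o q then o p else x with hε
  have hop := ho p (by omega) (by omega)
  have hoq := ho q (by omega) (by omega)
  have hor := ho r (by omega) (by omega)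
  have hne_pq : o p ≠ o q := fun h => by
    have := hoinj p q (by omega) (by omega) (by omega) (by omega) h; omega
  have hne_pr : o p ≠ o r := fun h => by
    have := hoinj p r (by omega) (by omega) (by omega) (by omega) h; omega
  have hne_qr : o q ≠ o r := fun h => by
    have := hoinj q r (by omega) (by omega) (by omega) (by omega) h; omega
  have hεmem : ∀ x, 1 ≤ x → x ≤ n+1 → 1 ≤ ε x ∧ ε x ≤ n+1 := by
    intro x h1 h2
    simp only [hε]
    split_ifs <;> omega
  have hεinj : ∀ x y, ε x = ε y → x = y := by
    intro x y h
    simp only [hε] at h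
    split_ifs at h <;> omega
  have hεid : ∀ x, x ≠ o p → x ≠ o q → x ≠ o r → ε x = x := by
    intro x h1 h2 h3
    simp only [hε]
    split_ifs <;> omega
  set g : ℕ → ℕ := fun x => f (ε x) with hg
  have hgm : Pmap n g := by
    intro x h1 h2
    have := hεmem x h1 h2
    exact hmap _ this.1 this.2
  have hgi : Pinj n g := by
    intro x y h1 h2 h3 h4 h
    have hx := hεmem x h1 h2
    have hy := hεmem y h3 h4
    exact hεinj x y (hinj _ _ hx.1 hx.2 hy.1 hy.2 h)
  -- the cycle as a finset
  set T : Finset ℕ := (Finset.Icc 1 m).image o with hT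
  have hmemT : ∀ x, x ∈ T ↔ ∃ s, 1 ≤ s ∧ s ≤ m ∧ o s = x := by
    intro x
    simp only [hT, Finset.mem_image, Finset.mem_Icc]
    constructor
    · rintro ⟨s, ⟨h1, h2⟩, h3⟩; exact ⟨s, h1, h2, h3⟩
    · rintro ⟨s, h1, h2, h3⟩; exact ⟨s, ⟨h1, h2⟩, h3⟩
  have hTsub : T ⊆ Finset.Icc 1 (n+1) := by
    intro x hx
    rw [hmemT] at hx
    obtain ⟨s, h1, h2, rfl⟩ := hx
    simp only [Finset.mem_Icc]
    exact ho s h1 h2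
  -- segment data
  set L1 := q - p with hL1
  set L2 := r - q with hL2
  set L3 := m + p - r with hL3
  set w1 : ℕ → ℕ := fun t => o (p + t) with hw1
  set w2 : ℕ → ℕ := fun t => o (q + t) with hw2
  set w3 : ℕ → ℕ := fun t => if t ≤ m - r then o (r + t) else o (t - (m - r)) with hw3
  have hεop : ε (o p) = o r := by simp [hε]
  have hεoq : ε (o q) = o p := by
    simp only [hε]
    rw [if_neg (by omega), if_neg (by omega)]
    simp
  have hεor : ε (o r) = o q := by
    simp only [hε]
    rw [if_neg (by omega)]
    simp
  -- w1 properties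
  have hw1b : ∀ t, 1 ≤ t → t ≤ L1 → 1 ≤ w1 t ∧ w1 t ≤ n+1 := by
    intro t h1 h2
    exact ho (p + t) (by omega) (by omega)
  have hw1inj : ∀ s t, 1 ≤ s → s ≤ L1 → 1 ≤ t → t ≤ L1 → w1 s = w1 t → s = t := by
    intro s t h1 h2 h3 h4 h
    have := hoinj (p+s) (p+t) (by omega) (by omega) (by omega) (by omega) h
    omega
  have hw1next : ∀ t, 1 ≤ t → t ≤ L1 → g (w1 t) = w1 (t % L1 + 1) := by
    intro t h1 h2
    rcases eq_or_lt_of_le h2 with heq | hlt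
    · subst heq
      show g (o (p + L1)) = w1 (L1 % L1 + 1)
      rw [show p + L1 = q by omega]
      show f (ε (o q)) = _
      rw [hεoq, hnext p (by omega) (by omega)]
      rw [Nat.mod_self, Nat.mod_eq_of_lt (by omega)]
    · show g (o (p + t)) = w1 (t % L1 + 1)
      have hid : ε (o (p + t)) = o (p + t) := by
        apply hεid <;>
        · intro h
          have := hoinj (p+t) _ (by omega) (by omega) (by omega) (by omega) h
          omega
      show f (ε (o (p + t))) = _
      rw [hid, hnext (p+t) (by omega) (by omega)]
      rw [Nat.mod_eq_of_lt (show p + t < m by omega), Nat.mod_eq_of_lt hlt]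
      show o (p + t + 1) = o (p + (t + 1))
      congr 1 <;> omega
  -- w2 properties
  have hw2b : ∀ t, 1 ≤ t → t ≤ L2 → 1 ≤ w2 t ∧ w2 t ≤ n+1 := by
    intro t h1 h2
    exact ho (q + t) (by omega) (by omega)
  have hw2inj : ∀ s t, 1 ≤ s → s ≤ L2 → 1 ≤ t → t ≤ L2 → w2 s = w2 t → s = t := by
    intro s t h1 h2 h3 h4 h
    have := hoinj (q+s) (q+t) (by omega) (by omega) (by omega) (by omega) h
    omega
  have hw2next : ∀ t, 1 ≤ t → t ≤ L2 → g (w2 t) = w2 (t % L2 + 1) := by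
    intro t h1 h2
    rcases eq_or_lt_of_le h2 with heq | hlt
    · subst heq
      show g (o (q + L2)) = w2 (L2 % L2 + 1)
      rw [show q + L2 = r by omega]
      show f (ε (o r)) = _
      rw [hεor, hnext q (by omega) (by omega)]
      rw [Nat.mod_self, Nat.mod_eq_of_lt (by omega)]
    · show g (o (q + t)) = w2 (t % L2 + 1)
      have hid : ε (o (q + t)) = o (q + t) := by
        apply hεid <;>
        · intro h
          have := hoinj (q+t) _ (by omega) (by omega) (by omega) (by omega) h
          omega
      show f (ε (o (q + t))) = _
      rw [hid, hnext (q+t) (by omega) (by omega)]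
      rw [Nat.mod_eq_of_lt (show q + t < m by omega), Nat.mod_eq_of_lt hlt]
      show o (q + t + 1) = o (q + (t + 1))
      congr 1 <;> omega
  -- w3 properties
  have hw3b : ∀ t, 1 ≤ t → t ≤ L3 → 1 ≤ w3 t ∧ w3 t ≤ n+1 := by
    intro t h1 h2
    simp only [hw3]
    split_ifs with h
    · exact ho (r + t) (by omega) (by omega)
    · exact ho (t - (m - r)) (by omega) (by omega)
  have hw3inj : ∀ s t, 1 ≤ s → s ≤ L3 → 1 ≤ t → t ≤ L3 → w3 s = w3 t → s = t := by
    intro s t h1 h2 h3 h4 h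
    simp only [hw3] at h
    split_ifs at h with hc1 hc2 hc2
    · have := hoinj (r+s) (r+t) (by omega) (by omega) (by omega) (by omega) h
      omega
    · have := hoinj (r+s) (t - (m-r)) (by omega) (by omega) (by omega) (by omega) h
      omega
    · have := hoinj (s - (m-r)) (r+t) (by omega) (by omega) (by omega) (by omega) h
      omega
    · have := hoinj (s - (m-r)) (t - (m-r)) (by omega) (by omega) (by omega) (by omega) h
      omega
  have hw3next : ∀ t, 1 ≤ t → t ≤ L3 → g (w3 t) = w3 (t % L3 + 1) := by
    intro t h1 h2
    rcases eq_or_lt_of_le h2 with heq | hlt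
    · -- t = L3 : w3 L3 = o p
      subst heq
      have hcase : ¬ (L3 ≤ m - r) := by omega
      have hw3L3 : w3 L3 = o p := by
        simp only [hw3, if_neg hcase]
        congr 1 <;> omega
      rw [hw3L3]
      show f (ε (o p)) = w3 (L3 % L3 + 1)
      rw [hεop, hnext r (by omega) (by omega), Nat.mod_self]
      simp only [hw3]
      rcases eq_or_lt_of_le hr with hrm | hrm
      · rw [if_neg (by omega)]
        rw [show r % m = 0 by rw [hrm]; exact Nat.mod_self m]
        congr 1 <;> omega
      · rw [if_pos (by omega)]
        rw [Nat.mod_eq_of_lt hrm]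
    · rcases Nat.lt_or_ge t (m - r) with hc | hc
      · -- within first part
        have e1 : w3 t = o (r + t) := by simp only [hw3]; rw [if_pos (by omega)]
        have e2 : w3 (t % L3 + 1) = o (r + t + 1) := by
          simp only [hw3]
          rw [Nat.mod_eq_of_lt hlt, if_pos (by omega)]
          congr 1 <;> omega
        rw [e1, e2]
        have hid : ε (o (r + t)) = o (r + t) := by
          apply hεid <;>
          · intro h
            have := hoinj (r+t) _ (by omega) (by omega) (by omega) (by omega) h
            omega
        show f (ε (o (r + t))) = _
        rw [hid, hnext (r+t) (by omega) (by omega)]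
        rw [Nat.mod_eq_of_lt (show r + t < m by omega)]
      · rcases eq_or_lt_of_le hc with hc2 | hc2
        · -- t = m - r (and r < m since t ≥ 1): w3 t = o m, next is o 1
          have hrm : r < m := by omega
          have e1 : w3 t = o m := by
            simp only [hw3]
            rw [if_pos (by omega)]
            congr 1 <;> omega
          have e2 : w3 (t % L3 + 1) = o 1 := by
            simp only [hw3]
            rw [Nat.mod_eq_of_lt hlt, if_neg (by omega)]
            congr 1 <;> omega
          rw [e1, e2]
          have hid : ε (o m) = o m := by
            apply hεid <;>
            · intro h
              have := hoinj m _ (by omega) (by omega) (by omega) (by omega) h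
              omega
          show f (ε (o m)) = _
          rw [hid, hnext m (by omega) (by omega), Nat.mod_self]
        · -- t > m - r, t < L3: w3 t = o (t - (m-r)) with index in [1, p-1]
          set s := t - (m - r) with hs
          have hsb : 1 ≤ s ∧ s < p := by omega
          have e1 : w3 t = o s := by simp only [hw3]; rw [if_neg (by omega)]
          have e2 : w3 (t % L3 + 1) = o (s + 1) := by
            simp only [hw3]
            rw [Nat.mod_eq_of_lt hlt, if_neg (by omega)]
            congr 1 <;> omega
          rw [e1, e2]
          have hid : ε (o s) = o s := by
            apply hεid <;>
            · intro h
              have := hoinj s _ (by omega) (by omega) (by omega) (by omega) h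
              omega
          show f (ε (o s)) = _
          rw [hid, hnext s (by omega) (by omega)]
          rw [Nat.mod_eq_of_lt (show s < m by omega)]
  -- membership characterizations of the three segment images
  have hmemT1 : ∀ x, x ∈ (Finset.Icc 1 L1).image w1 ↔
      ∃ s, p + 1 ≤ s ∧ s ≤ q ∧ o s = x := by
    intro x
    simp only [Finset.mem_image, Finset.mem_Icc, hw1]
    constructor
    · rintro ⟨t, ⟨h1, h2⟩, h3⟩; exact ⟨p + t, by omega, by omega, h3⟩
    · rintro ⟨s, h1, h2, h3⟩; exact ⟨s - p, ⟨by omega, by omega⟩, by rw [show p + (s - p) = s by omega]; exact h3⟩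
  have hmemT2 : ∀ x, x ∈ (Finset.Icc 1 L2).image w2 ↔
      ∃ s, q + 1 ≤ s ∧ s ≤ r ∧ o s = x := by
    intro x
    simp only [Finset.mem_image, Finset.mem_Icc, hw2]
    constructor
    · rintro ⟨t, ⟨h1, h2⟩, h3⟩; exact ⟨q + t, by omega, by omega, h3⟩
    · rintro ⟨s, h1, h2, h3⟩; exact ⟨s - q, ⟨by omega, by omega⟩, by rw [show q + (s - q) = s by omega]; exact h3⟩
  have hmemT3 : ∀ x, x ∈ (Finset.Icc 1 L3).image w3 ↔
      ∃ s, ((r + 1 ≤ s ∧ s ≤ m) ∨ (1 ≤ s ∧ s ≤ p)) ∧ o s = x := by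
    intro x
    simp only [Finset.mem_image, Finset.mem_Icc, hw3]
    constructor
    · rintro ⟨t, ⟨h1, h2⟩, h3⟩
      by_cases hc : t ≤ m - r
      · rw [if_pos hc] at h3
        exact ⟨r + t, Or.inl ⟨by omega, by omega⟩, h3⟩
      · rw [if_neg hc] at h3
        exact ⟨t - (m - r), Or.inr ⟨by omega, by omega⟩, h3⟩
    · rintro ⟨s, hs | hs, h3⟩
      · refine ⟨s - r, ⟨by omega, by omega⟩, ?_⟩
        rw [if_pos (by omega), show r + (s - r) = s by omega]
        exact h3
      · refine ⟨s + (m - r), ⟨by omega, by omega⟩, ?_⟩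
        rw [if_neg (by omega), show s + (m - r) - (m - r) = s by omega]
        exact h3
  -- T is the disjoint union of the three segments
  have hTunion : T = ((Finset.Icc 1 L1).image w1 ∪ (Finset.Icc 1 L2).image w2)
      ∪ (Finset.Icc 1 L3).image w3 := by
    ext x
    simp only [Finset.mem_union, hmemT, hmemT1, hmemT2, hmemT3]
    constructor
    · rintro ⟨s, h1, h2, h3⟩
      rcases Nat.lt_or_ge s (p+1) with hc | hc
      · exact Or.inr ⟨s, Or.inr ⟨by omega, by omega⟩, h3⟩
      · rcases Nat.lt_or_ge s (q+1) with hc2 | hc2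
        · exact Or.inl (Or.inl ⟨s, by omega, by omega, h3⟩)
        · rcases Nat.lt_or_ge s (r+1) with hc3 | hc3
          · exact Or.inl (Or.inr ⟨s, by omega, by omega, h3⟩)
          · exact Or.inr ⟨s, Or.inl ⟨by omega, by omega⟩, h3⟩
    · rintro ((⟨s, h1, h2, h3⟩ | ⟨s, h1, h2, h3⟩) | ⟨s, hs | hs, h3⟩)
      · exact ⟨s, by omega, by omega, h3⟩
      · exact ⟨s, by omega, by omega, h3⟩
      · exact ⟨s, by omega, by omega, h3⟩
      · exact ⟨s, by omega, by omega, h3⟩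
  have hdisj12 : Disjoint ((Finset.Icc 1 L1).image w1) ((Finset.Icc 1 L2).image w2) := by
    rw [Finset.disjoint_left]
    intro x hx1 hx2
    rw [hmemT1] at hx1; rw [hmemT2] at hx2
    obtain ⟨s, hs1, hs2, hs3⟩ := hx1
    obtain ⟨t, ht1, ht2, ht3⟩ := hx2
    have := hoinj s t (by omega) (by omega) (by omega) (by omega) (by rw [hs3, ht3])
    omega
  have hdisj3 : Disjoint ((Finset.Icc 1 L1).image w1 ∪ (Finset.Icc 1 L2).image w2)
      ((Finset.Icc 1 L3).image w3) := by
    rw [Finset.disjoint_left]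
    intro x hx1 hx2
    rw [Finset.mem_union] at hx1
    rw [hmemT3] at hx2
    obtain ⟨t, ht1, ht3⟩ := hx2
    rcases hx1 with hx1 | hx1
    · rw [hmemT1] at hx1
      obtain ⟨s, hs1, hs2, hs3⟩ := hx1
      have := hoinj s t (by omega) (by omega) (by omega) (by omega) (by rw [hs3, ht3])
      omega
    · rw [hmemT2] at hx1
      obtain ⟨s, hs1, hs2, hs3⟩ := hx1
      have := hoinj s t (by omega) (by omega) (by omega) (by omega) (by rw [hs3, ht3])
      omega
  -- orbits outside T coincide
  have hout : ∀ x, x ∈ Finset.Icc 1 (n+1) \ T → orbitOf g n x = orbitOf f n x := by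
    intro x hx
    rw [Finset.mem_sdiff, Finset.mem_Icc] at hx
    obtain ⟨⟨hx1, hx2⟩, hxT⟩ := hx
    have hiter : ∀ k, g^[k] x = f^[k] x := by
      intro k
      induction k with
      | zero => rfl
      | succ k ih =>
        rw [Function.iterate_succ_apply', Function.iterate_succ_apply', ih]
        have hnot := cycle_outside hmap hinj hm ho hnext hx1 hx2 (by rwa [← hT]) k
        rw [← hT] at hnot
        have hid : ε (f^[k] x) = f^[k] x := by
          apply hεid <;>
          · intro h
            apply hnot
            rw [hmemT, h]
            first
            | exact ⟨p, by omega, by omega, rfl⟩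
            | exact ⟨q, by omega, by omega, rfl⟩
            | exact ⟨r, by omega, by omega, rfl⟩
        show f (ε (f^[k] x)) = f (f^[k] x)
        rw [hid]
    unfold orbitOf
    congr 1
    apply Finset.image_congr
    intro k _
    exact hiter k
  -- counting
  have hsplit : ∀ (F : ℕ → ℕ),
      coddAux F n = ((Finset.Icc 1 (n+1) \ T).filter
          (fun i => (∀ j ∈ orbitOf F n i, i ≤ j) ∧ (orbitOf F n i).card % 2 = 1)).card
        + (T.filter
          (fun i => (∀ j ∈ orbitOf F n i, i ≤ j) ∧ (orbitOf F n i).card % 2 = 1)).card := by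
    intro F
    unfold coddAux
    rw [← Finset.card_union_of_disjoint (Finset.disjoint_filter_filter Finset.sdiff_disjoint)]
    congr 1
    rw [← Finset.filter_union]
    congr 1
    exact (Finset.sdiff_union_self_eq_union.trans (Finset.union_eq_left.2 hTsub)).symm
  have hcongr : ((Finset.Icc 1 (n+1) \ T).filter
        (fun i => (∀ j ∈ orbitOf g n i, i ≤ j) ∧ (orbitOf g n i).card % 2 = 1))
      = ((Finset.Icc 1 (n+1) \ T).filter
        (fun i => (∀ j ∈ orbitOf f n i, i ≤ j) ∧ (orbitOf f n i).card % 2 = 1)) := by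
    apply Finset.filter_congr
    intro x hx
    rw [hout x hx]
  have hcf : (T.filter
      (fun i => (∀ j ∈ orbitOf f n i, i ≤ j) ∧ (orbitOf f n i).card % 2 = 1)).card
      = m % 2 := by
    rw [hT]
    exact cycle_count hmap hinj hm ho hoinj hnext
  have hcg : (T.filter
      (fun i => (∀ j ∈ orbitOf g n i, i ≤ j) ∧ (orbitOf g n i).card % 2 = 1)).card
      = L1 % 2 + L2 % 2 + L3 % 2 := by
    rw [hTunion, Finset.filter_union,
      Finset.card_union_of_disjoint (Finset.disjoint_filter_filter hdisj3),
      Finset.filter_union,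
      Finset.card_union_of_disjoint (Finset.disjoint_filter_filter hdisj12)]
    rw [cycle_count hgm hgi (show 0 < L1 by omega) hw1b hw1inj hw1next]
    rw [cycle_count hgm hgi (show 0 < L2 by omega) hw2b hw2inj hw2next]
    rw [cycle_count hgm hgi (show 0 < L3 by omega) hw3b hw3inj hw3next]
  have h1 := hsplit g
  have h2 := hsplit f
  rw [hcongr] at h1
  omega

end CGAux
namespace CGAux

lemma rotEquiv_apply (a b c : ℕ) (h1 : a ≤ b) (h2 : b ≤ c) (x : ℕ) :
    rotEquiv a b c x = rotFun a b c x := by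
  unfold rotEquiv
  rw [dif_pos ⟨h1, h2⟩]
  rfl

lemma rotEquiv_symm_apply (a b c : ℕ) (h1 : a ≤ b) (h2 : b ≤ c) (x : ℕ) :
    (rotEquiv a b c).symm x = rotFun a (a + c - b) c x := by
  unfold rotEquiv
  rw [dif_pos ⟨h1, h2⟩]
  rfl

lemma key_eps (a b c i : ℕ) (ha : 1 ≤ a) (hab : a < b) (hbc : b < c) (hi : 1 ≤ i) :
    (if rotFun a b c i = a then c else if rotFun a b c i = b then a else
      if rotFun a b c i = c then b else rotFun a b c i)
    = rotFun a b c (i - 1) + 1 := by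
  unfold rotFun
  split_ifs <;> omega

lemma cgNext_Pmap {n : ℕ} {π : Equiv.Perm ℕ} (hπ : IsExtPerm n π) :
    Pmap n (cgNext π) := by
  obtain ⟨h0, hfix, hbig⟩ := hπ
  intro x h1 h2
  unfold cgNext
  have hle : π (x - 1) ≤ n + 1 := by
    by_contra hcon
    push_neg at hcon
    have := hbig _ hcon
    have := π.injective this
    omega
  have hne : π (x - 1) ≠ n + 1 := by
    intro h
    rw [← hfix] at h
    have := π.injective h
    omega
  set v := π (x - 1) + 1 with hv
  have hv1 : 1 ≤ v := by omega
  have hv2 : v ≤ n + 1 := by omega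
  constructor
  · by_contra hcon
    push_neg at hcon
    have h0' : π.symm v = 0 := by omega
    have : v = π 0 := by rw [← h0']; exact (π.apply_symm_apply v).symm
    rw [h0] at this
    omega
  · by_contra hcon
    push_neg at hcon
    have := hbig _ hcon
    have h2' : π (π.symm v) = v := π.apply_symm_apply v
    rw [this] at h2'
    omega

lemma cgNext_Pinj {n : ℕ} {π : Equiv.Perm ℕ} (hπ : IsExtPerm n π) :
    Pinj n (cgNext π) := by
  intro x y h1 h2 h3 h4 h
  unfold cgNext at h
  have h5 : π (x - 1) + 1 = π (y - 1) + 1 := π.symm.injective h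
  have h6 : π (x - 1) = π (y - 1) := by omega
  have := π.injective h6
  omega

lemma codd_applyTransp {n : ℕ} {π : Equiv.Perm ℕ} (hπ : IsExtPerm n π)
    (a b c : ℕ) (ha : 1 ≤ a) (hab : a < b) (hbc : b < c) (hc : c ≤ n + 1) :
    codd n (applyTransp π a b c) =
      coddAux (fun x => cgNext π
        (if x = a then c else if x = b then a else if x = c then b else x)) n := by
  have hfm := cgNext_Pmap hπ
  have hfi := cgNext_Pinj hπ
  have hgm : Pmap n (fun x => cgNext π
      (if x = a then c else if x = b then a else if x = c then b else x)) := by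
    intro x h1 h2
    apply hfm
    · split_ifs <;> omega
    · split_ifs <;> omega
  have hgi : Pinj n (fun x => cgNext π
      (if x = a then c else if x = b then a else if x = c then b else x)) := by
    intro x y h1 h2 h3 h4 h
    simp only at h
    have := hfi _ _ (by split_ifs <;> omega) (by split_ifs <;> omega)
      (by split_ifs <;> omega) (by split_ifs <;> omega) h
    split_ifs at this <;> omega
  show coddAux (cgNext (applyTransp π a b c)) n = _
  apply coddAux_conj n _ (rotFun a b c) (rotFun a (a + c - b) c) hgm hgi
  · intro x h1 h2
    unfold rotFun
    split_ifs <;> omega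
  · intro x h1 h2
    unfold rotFun
    split_ifs <;> omega
  · intro x _ _
    unfold rotFun
    split_ifs <;> omega
  · intro x _ _
    unfold rotFun
    split_ifs <;> omega
  · intro x h1 h2
    show cgNext (applyTransp π a b c) x
      = rotFun a (a + c - b) c (cgNext π
        (if rotFun a b c x = a then c else if rotFun a b c x = b then a else
          if rotFun a b c x = c then b else rotFun a b c x))
    rw [key_eps a b c x ha hab hbc h1]
    unfold cgNext applyTransp
    rw [Equiv.symm_trans_apply, Equiv.trans_apply]
    rw [rotEquiv_apply a b c (by omega) (by omega),
        rotEquiv_symm_apply a b c (by omega) (by omega)]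
    congr 2 <;> omega

end CGAux
/-- If an odd cycle `C = (o_1, …, o_m)` of the cycle graph `G(π)` contains
a valid oriented triple `(o_i, o_j, o_k)`, with positions `i < j < k` and `o_k > o_j > o_i`,
then `C` contains a valid oriented triple `(o_{i'}, o_{j'}, o_{k'})`, with positions
`i' < j' < k'`, such that `i' = 1`. -/
theorem odd_cycle_valid_triple_case_two
    (n : ℕ) (π : Equiv.Perm ℕ) (hπ : IsExtPerm n π)
    (m : ℕ) (o : ℕ → ℕ) (hC : IsCycleOf n π m o) (hOdd : m % 2 = 1)
    (i j k : ℕ) (hi : 1 ≤ i) (hij : i < j) (hjk : j < k) (hk : k ≤ m)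
    (hpat : o k > o j ∧ o j > o i)
    (hvalid : ValidOrientedTriple n π (o i) (o j) (o k)) :
    ∃ i' j' k' : ℕ, 1 ≤ i' ∧ i' < j' ∧ j' < k' ∧ k' ≤ m ∧ i' = 1 ∧
      ValidOrientedTriple n π (o i') (o j') (o k') := by
  obtain ⟨hm, ho, hoinj, hnextC, hmax⟩ := hC
  have hfm := CGAux.cgNext_Pmap hπ
  have hfi := CGAux.cgNext_Pinj hπ
  obtain ⟨hpat1, hpat2⟩ := hpat
  have htt : IsTwoTransposition n π (o i) (o j) (o k) := by
    rcases hvalid with ⟨h1, h2, _⟩ | ⟨h1, h2, _⟩ | ⟨h1, h2, h3⟩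
    · omega
    · omega
    · exact h3
  obtain ⟨hta, htb, htc, htd, hcodd⟩ := htt
  -- engine applied to the given triple
  have heng1 := CGAux.engine n (cgNext π) hfm hfi m o hm ho hoinj hnextC
    i j k hi hij hjk hk
  have hfun1 : (fun x => cgNext π (if x = o i then o k else if x = o k then o j else
        if x = o j then o i else x))
      = (fun x => cgNext π (if x = o i then o k else if x = o j then o i else
        if x = o k then o j else x)) := by
    funext x
    congr 1
    split_ifs <;> omega
  rw [CGAux.codd_applyTransp hπ (o i) (o j) (o k) hta htb htc htd] at hcodd
  rw [← hfun1] at hcodd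
  have hcodd' : coddAux (fun x => cgNext π (if x = o i then o k else
      if x = o k then o j else if x = o j then o i else x)) n
      = coddAux (cgNext π) n + 2 := hcodd
  have hpar1 : (j - i) % 2 = 1 ∧ (k - j) % 2 = 1 ∧ (m + i - k) % 2 = 1 := by
    omega
  have hi2 : 2 ≤ i := by
    by_contra hcon
    have hieq : i = 1 := by omega
    have := hmax k (by omega) hk
    rw [hieq] at hpat2
    omega
  -- main construction
  have main : ∀ q' r', 2 ≤ q' → q' < r' → r' ≤ m → o q' < o r' →
      (q' - 1) % 2 = 1 → (r' - q') % 2 = 1 → (m + 1 - r') % 2 = 1 →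
      ∃ i' j' k' : ℕ, 1 ≤ i' ∧ i' < j' ∧ j' < k' ∧ k' ≤ m ∧ i' = 1 ∧
        ValidOrientedTriple n π (o i') (o j') (o k') := by
    intro q' r' hq2 hqr' hr'm holt hp1 hp2 hp3
    have hoq' := ho q' (by omega) (by omega)
    have hor' := ho r' (by omega) hr'm
    have ho1 := ho 1 (by omega) (by omega)
    have hmaxr' : o r' < o 1 := hmax r' (by omega) hr'm
    have heng2 := CGAux.engine n (cgNext π) hfm hfi m o hm ho hoinj hnextC
      1 q' r' (le_refl 1) (by omega) hqr' hr'm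
    have heng2' : coddAux (fun x => cgNext π (if x = o 1 then o r' else
        if x = o r' then o q' else if x = o q' then o 1 else x)) n
        = coddAux (cgNext π) n + 2 := by
      omega
    have hfun2 : (fun x => cgNext π (if x = o 1 then o r' else
        if x = o r' then o q' else if x = o q' then o 1 else x))
        = (fun x => cgNext π (if x = o q' then o 1 else
        if x = o r' then o q' else if x = o 1 then o r' else x)) := by
      funext x
      congr 1
      split_ifs <;> omega
    refine ⟨1, q', r', le_refl 1, by omega, hqr', hr'm, rfl, Or.inl ⟨hmaxr', holt, ?_⟩⟩
    refine ⟨hoq'.1, holt, hmaxr', ho1.2, ?_⟩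
    rw [CGAux.codd_applyTransp hπ (o q') (o r') (o 1) hoq'.1 holt hmaxr' ho1.2]
    show coddAux _ n = coddAux (cgNext π) n + 2
    rw [← hfun2]
    exact heng2'
  rcases Nat.even_or_odd i with hev | hod
  · -- i even : use (1, i, j)
    have hie : i % 2 = 0 := Nat.even_iff.1 hev
    exact main i j hi2 hij (by omega) hpat2 (by omega) (by omega) (by omega)
  · -- i odd : use (1, j, k)
    have hio : i % 2 = 1 := Nat.odd_iff.1 hod
    exact main j k (by omega) hjk hk hpat1 (by omega) (by omega) (by omega)
end
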